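/- arXiv:2407.21081 — 7 statements merged into one kernel-verified Lean document; each statement's English description precedes it below -/
import Mathlib

section
/- Let f : ℝ → ℝ be continuous and concave on [a,b] with a < c₁ < c₂ ≤ b. Then for every x ∈ [a,c₁] one has L_{a,c₂}(x) ≤ L_{a,c₁}(x), and consequently the maximum absolute error is monotone: E(a,c₁) ≤ E(a,c₂). (Fixing the left endpoint of an interval, the maximal absolute error of the secant approximation does not decrease when the interval length increases.) -/
/-- The secant line of `f` through `(u, f u)` and `(v, f v)`. -/
noncomputable def secant (f : ℝ → ℝ) (u v : ℝ) (x : ℝ) : ℝ :=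
  f u + ((f v - f u) / (v - u)) * (x - u)

/-- The maximum absolute error of the secant approximation of `f` on `[u, v]`:
`E(u,v) = sup_{x ∈ [u,v]} (f x - L_{u,v} x)`. -/
noncomputable def maxErr (f : ℝ → ℝ) (u v : ℝ) : ℝ :=
  sSup ((fun x => f x - secant f u v x) '' Set.Icc u v)

/-!
For concave `f` the slope of the secant through `(a, f a)` and `(c, f c)` is antitone in `c`,
so on `[a, c₁]` the longer secant lies below the shorter one and the error `f - secant` only grows.
The supremum defining the larger error is finite because `f - secant` is continuous on a compact
interval.
-/

open Set

theorem secant_eq_slope (f : ℝ → ℝ) (u v x : ℝ) :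
    secant f u v x = f u + slope f u v * (x - u) := by
  rw [secant, slope_def_field]

theorem continuous_secant (f : ℝ → ℝ) (u v : ℝ) : Continuous (secant f u v) := by
  unfold secant
  fun_prop

theorem ConcaveOn.secant_anti_right {s : Set ℝ} {f : ℝ → ℝ} (hf : ConcaveOn ℝ s f)
    {a c₁ c₂ x : ℝ} (ha : a ∈ s) (hc₁ : c₁ ∈ s) (hc₂ : c₂ ∈ s) (hac₁ : a < c₁) (hc₁c₂ : c₁ ≤ c₂)
    (hax : a ≤ x) : secant f a c₂ x ≤ secant f a c₁ x := by
  have hslope : slope f a c₂ ≤ slope f a c₁ :=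
    hf.antitoneOn_slope_gt ha ⟨hc₁, hac₁⟩ ⟨hc₂, hac₁.trans_le hc₁c₂⟩ hc₁c₂
  rw [secant_eq_slope, secant_eq_slope]
  gcongr

theorem ContinuousOn.bddAbove_secantError {f : ℝ → ℝ} {u v : ℝ} (hf : ContinuousOn f (Icc u v)) :
    BddAbove ((fun x => f x - secant f u v x) '' Icc u v) :=
  (isCompact_Icc.image_of_continuousOn (hf.sub (continuous_secant f u v).continuousOn)).bddAbove

theorem maxErr_le_maxErr_of_secant_le {f : ℝ → ℝ} {u v₁ v₂ : ℝ} (huv₁ : u ≤ v₁) (hv₁v₂ : v₁ ≤ v₂)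
    (hbdd : BddAbove ((fun x => f x - secant f u v₂ x) '' Icc u v₂))
    (hsec : ∀ x ∈ Icc u v₁, secant f u v₂ x ≤ secant f u v₁ x) :
    maxErr f u v₁ ≤ maxErr f u v₂ := by
  refine csSup_le ((nonempty_Icc.2 huv₁).image _) ?_
  rintro _ ⟨x, hx, rfl⟩
  exact le_csSup_of_le hbdd ⟨x, Icc_subset_Icc_right hv₁v₂ hx, rfl⟩
    (sub_le_sub_left (hsec x hx) _)

theorem secant_error_mono_right_general (f : ℝ → ℝ) (a b c₁ c₂ : ℝ)
    (hf : ContinuousOn f (Set.Icc a b))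
    (hconc : ConcaveOn ℝ (Set.Icc a b) f)
    (hac₁ : a < c₁) (hc₁c₂ : c₁ < c₂) (hc₂b : c₂ ≤ b) :
    (∀ x ∈ Set.Icc a c₁, secant f a c₂ x ≤ secant f a c₁ x) ∧
    maxErr f a c₁ ≤ maxErr f a c₂ := by
  have hc₁b : c₁ ≤ b := hc₁c₂.le.trans hc₂b
  have hsec : ∀ x ∈ Icc a c₁, secant f a c₂ x ≤ secant f a c₁ x := fun x hx =>
    hconc.secant_anti_right (left_mem_Icc.2 (hac₁.le.trans hc₁b)) ⟨hac₁.le, hc₁b⟩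
      ⟨(hac₁.trans hc₁c₂).le, hc₂b⟩ hac₁ hc₁c₂.le hx.1
  have hbdd := (hf.mono (Icc_subset_Icc_right hc₂b)).bddAbove_secantError
  exact ⟨hsec, maxErr_le_maxErr_of_secant_le hac₁.le hc₁c₂.le hbdd hsec⟩

/-- Fixing the left endpoint, the secant line drops and the maximal
absolute error does not decrease when the interval grows. -/
theorem secant_error_mono_right (f : ℝ → ℝ) (a b c₁ c₂ : ℝ)
    (hab : a < b)
    (hf : ContinuousOn f (Set.Icc a b))
    (hconc : ConcaveOn ℝ (Set.Icc a b) f)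
    (hac₁ : a < c₁) (hc₁c₂ : c₁ < c₂) (hc₂b : c₂ ≤ b) :
    (∀ x ∈ Set.Icc a c₁, secant f a c₂ x ≤ secant f a c₁ x) ∧
    maxErr f a c₁ ≤ maxErr f a c₂ :=
  secant_error_mono_right_general f a b c₁ c₂ hf hconc hac₁ hc₁c₂ hc₂b
end

section
/- Let f : ℝ → ℝ be continuous and concave on [a,b] with a < b. Then the function c ↦ E(a,c) = sup_{x ∈ [a,c]} (f(x) - L_{a,c}(x)) is continuous on (a,b]. (The maximal absolute error of the secant approximation changes continuously as the right endpoint of the interval moves.) -/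
open Set


/-- The maximal absolute error changes continuously as the right
endpoint of the interval moves. -/
theorem secant_error_continuous (f : ℝ → ℝ) (a b : ℝ)
    (hab : a < b)
    (hf : ContinuousOn f (Set.Icc a b))
    (hconc : ConcaveOn ℝ (Set.Icc a b) f) :
    ContinuousOn (fun c => maxErr f a c) (Set.Ioc a b) := by
  set g : ℝ → ℝ := Set.IccExtend hab.le ((Set.Icc a b).restrict f) with hg
  have hgc : Continuous g := (continuousOn_iff_continuous_restrict.mp hf).Icc_extend'
  have hgf : ∀ x ∈ Icc a b, g x = f x := fun x hx => IccExtend_of_mem hab.le _ hx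
  -- the key rewriting: for c ∈ Ioc a b, maxErr f a c = sSup over the fixed interval Icc a b
  have key : ∀ c ∈ Ioc a b, maxErr f a c
      = sSup ((fun x => g x - secant g a c x) '' Icc a b) := by
    intro c hc
    have hac : a < c := hc.1
    have hcb : c ≤ b := hc.2
    have ha : a ∈ Icc a b := ⟨le_rfl, hab.le⟩
    have hcab : c ∈ Icc a b := ⟨hac.le, hcb⟩
    have hsec : secant g a c = secant f a c := by
      funext x; simp [secant, hgf a ha, hgf c hcab]
    have himg : (fun x => f x - secant f a c x) '' Icc a c
        = (fun x => g x - secant g a c x) '' Icc a c := by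
      apply image_congr
      intro x hx
      rw [hsec, hgf x ⟨hx.1, hx.2.trans hcb⟩]
    have hFcont : Continuous (fun x => g x - secant g a c x) := by
      unfold secant; fun_prop
    have hbddB : BddAbove ((fun x => g x - secant g a c x) '' Icc a b) :=
      (isCompact_Icc.image hFcont).bddAbove
    have hbddS : BddAbove ((fun x => g x - secant g a c x) '' Icc a c) :=
      hbddB.mono (image_mono (Icc_subset_Icc le_rfl hcb))
    have hneS : ((fun x => g x - secant g a c x) '' Icc a c).Nonempty :=
      (nonempty_Icc.mpr hac.le).image _
    have hFa : g a - secant g a c a = 0 := by simp [secant]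
    rw [maxErr, himg]
    apply le_antisymm
    · exact csSup_le_csSup hbddB hneS (image_mono (Icc_subset_Icc le_rfl hcb))
    · apply csSup_le (hneS.mono (image_mono (Icc_subset_Icc le_rfl hcb)))
      rintro y ⟨x, hx, rfl⟩
      rcases le_or_gt x c with h | h
      · exact le_csSup hbddS ⟨x, ⟨hx.1, h⟩, rfl⟩
      · -- concavity: error is ≤ 0 to the right of c
        have hax : a < x := hac.trans h
        set μ : ℝ := (x - c) / (x - a)
        set ν : ℝ := (c - a) / (x - a)
        have hμ : 0 ≤ μ := div_nonneg (by linarith) (by linarith)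
        have hν : 0 ≤ ν := div_nonneg (by linarith) (by linarith)
        have hxa : x - a ≠ 0 := sub_ne_zero.2 (ne_of_gt hax)
        have hsum : μ + ν = 1 := by
          rw [← add_div]; field_simp; ring
        have hcomb : μ • a + ν • x = c := by
          simp only [smul_eq_mul, μ, ν]
          field_simp
          ring
        have hcv := hconc.2 ha hx hμ hν hsum
        rw [hcomb] at hcv
        simp only [smul_eq_mul, μ, ν] at hcv
        have hkey : (x - c) * f a + (c - a) * f x ≤ (x - a) * f c := by
          rw [div_mul_eq_mul_div, div_mul_eq_mul_div, ← add_div,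
            div_le_iff₀ (by linarith : (0:ℝ) < x - a)] at hcv
          nlinarith [hcv]
        have h0 : g x - secant g a c x ≤ 0 := by
          rw [hsec, hgf x hx]
          have : (f c - f a) / (c - a) * (x - a) = ((f c - f a) * (x - a)) / (c - a) := by
            ring
          rw [secant, this, sub_nonpos, ← sub_le_iff_le_add',
            le_div_iff₀ (by linarith : (0:ℝ) < c - a)]
          nlinarith
        calc g x - secant g a c x ≤ 0 := h0
          _ = g a - secant g a c a := hFa.symm
          _ ≤ _ := le_csSup hbddS ⟨a, ⟨le_rfl, hac.le⟩, rfl⟩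
  -- now continuity of the fixed-interval sup
  have hcont : ContinuousOn (fun c => sSup ((fun x => g x - secant g a c x) '' Icc a b))
      (Ioi a) := by
    rw [continuousOn_iff_continuous_restrict]
    have : Continuous ↿(fun (c : Ioi a) (x : ℝ) => g x - secant g (a) (c : ℝ) x) := by
      unfold secant Function.HasUncurry.uncurry
      apply Continuous.sub
      · exact hgc.comp continuous_snd
      · apply Continuous.add continuous_const
        apply Continuous.mul
        · apply Continuous.div
          · fun_prop
          · fun_prop
          · rintro ⟨⟨c, hc⟩, x⟩
            exact sub_ne_zero.2 (ne_of_gt hc)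
        · fun_prop
    exact isCompact_Icc.continuous_sSup this
  exact ContinuousOn.congr (hcont.mono Ioc_subset_Ioi_self) key
end

section
/- Let f : ℝ → ℝ be continuous and strictly concave on [a,b] with a < b, and let c° ∈ (a,b) be a minimizer of c ↦ max(E(a,c), E(c,b)) over (a,b). Then for every c ∈ (a,b) with c ≠ c°, writing E₁ = E(a,c) and E₂ = E(c,b), one has min(E₁,E₂) < E(a,c°) = E(c°,b) < max(E₁,E₂). -/
open Set Filter Topology

namespace StraddleAux

variable {f : ℝ → ℝ} {a b u v : ℝ}

lemma secant_left (f : ℝ → ℝ) (u v : ℝ) : secant f u v u = f u := by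
  simp [secant]

lemma secant_right (f : ℝ → ℝ) (huv : u < v) : secant f u v v = f v := by
  have h : v - u ≠ 0 := sub_ne_zero.mpr huv.ne'
  rw [secant, div_mul_cancel₀ _ h]; ring

/-- Rewrite the secant through its right endpoint. -/
lemma secant_eq_right (f : ℝ → ℝ) (huv : u < v) (x : ℝ) :
    secant f u v x = f v + ((f v - f u) / (v - u)) * (x - v) := by
  have h : v - u ≠ 0 := sub_ne_zero.mpr huv.ne'
  simp only [secant]
  field_simp
  ring

lemma isGreatest_maxErr (hf : ContinuousOn f (Set.Icc a b))
    (hu : a ≤ u) (huv : u < v) (hv : v ≤ b) :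
    IsGreatest ((fun x => f x - secant f u v x) '' Set.Icc u v) (maxErr f u v) := by
  have hsub : Set.Icc u v ⊆ Set.Icc a b := Set.Icc_subset_Icc hu hv
  have hcont : ContinuousOn (fun x => f x - secant f u v x) (Set.Icc u v) := by
    refine (hf.mono hsub).sub ?_
    exact (Continuous.continuousOn (by unfold secant; continuity))
  obtain ⟨x, hx, hmax⟩ := isCompact_Icc.exists_isMaxOn (Set.nonempty_Icc.mpr huv.le) hcont
  have hG : IsGreatest ((fun x => f x - secant f u v x) '' Set.Icc u v)
      (f x - secant f u v x) := by
    constructor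
    · exact Set.mem_image_of_mem _ hx
    · rintro _ ⟨y, hy, rfl⟩
      exact hmax hy
  rw [maxErr, hG.csSup_eq]
  exact hG

lemma le_maxErr (hf : ContinuousOn f (Set.Icc a b))
    (hu : a ≤ u) (huv : u < v) (hv : v ≤ b) {x : ℝ} (hx : x ∈ Set.Icc u v) :
    f x - secant f u v x ≤ maxErr f u v :=
  (isGreatest_maxErr hf hu huv hv).2 (Set.mem_image_of_mem _ hx)

lemma maxErr_pos (hf : ContinuousOn f (Set.Icc a b))
    (hconc : StrictConcaveOn ℝ (Set.Icc a b) f)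
    (hu : a ≤ u) (huv : u < v) (hv : v ≤ b) :
    0 < maxErr f u v := by
  set m := (u + v) / 2 with hm
  have hum : u < m := by simp only [hm]; linarith
  have hmv : m < v := by simp only [hm]; linarith
  have humem : u ∈ Set.Icc a b := ⟨hu, huv.le.trans hv⟩
  have hvmem : v ∈ Set.Icc a b := ⟨hu.trans huv.le, hv⟩
  have hkey := hconc.2 humem hvmem huv.ne (by norm_num : (0:ℝ) < 1/2)
      (by norm_num : (0:ℝ) < 1/2) (by norm_num)
  have hmid : (1/2 : ℝ) • u + (1/2 : ℝ) • v = m := by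
    simp only [smul_eq_mul, hm]; ring
  rw [hmid] at hkey
  have hsm : secant f u v m = (f u + f v) / 2 := by
    have h : v - u ≠ 0 := sub_ne_zero.mpr huv.ne'
    simp only [secant, hm]
    field_simp
    ring
  have hlt : 0 < f m - secant f u v m := by
    rw [hsm]
    simp only [smul_eq_mul] at hkey
    linarith
  have := le_maxErr hf hu huv hv ⟨hum.le, hmv.le⟩
  linarith

/-- The max error point is interior, packaged: there is `x ∈ Ioo u v` attaining `maxErr`. -/
lemma exists_interior_max (hf : ContinuousOn f (Set.Icc a b))
    (hconc : StrictConcaveOn ℝ (Set.Icc a b) f)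
    (hu : a ≤ u) (huv : u < v) (hv : v ≤ b) :
    ∃ x ∈ Set.Ioo u v, maxErr f u v = f x - secant f u v x := by
  obtain ⟨x, hx, hxe⟩ := (isGreatest_maxErr hf hu huv hv).1
  have hxe' : f x - secant f u v x = maxErr f u v := hxe
  have hpos := maxErr_pos hf hconc hu huv hv
  rw [← hxe'] at hpos
  have hxu : x ≠ u := by
    intro h
    rw [h, secant_left] at hpos; simp at hpos
  have hxv : x ≠ v := by
    intro h
    rw [h, secant_right f huv] at hpos; simp at hpos
  exact ⟨x, ⟨lt_of_le_of_ne hx.1 (Ne.symm hxu), lt_of_le_of_ne hx.2 hxv⟩, hxe'.symm⟩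

/-- Strict monotonicity in the right endpoint. -/
lemma maxErr_lt_right (hf : ContinuousOn f (Set.Icc a b))
    (hconc : StrictConcaveOn ℝ (Set.Icc a b) f)
    {v' : ℝ} (hu : a ≤ u) (huv : u < v) (hvv' : v < v') (hv' : v' ≤ b) :
    maxErr f u v < maxErr f u v' := by
  have hvb : v ≤ b := hvv'.le.trans hv'
  obtain ⟨x, hx, hxe⟩ := exists_interior_max hf hconc hu huv hvb
  have humem : u ∈ Set.Icc a b := ⟨hu, huv.le.trans hvb⟩
  have hvmem : v ∈ Set.Icc a b := ⟨hu.trans huv.le, hvb⟩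
  have hv'mem : v' ∈ Set.Icc a b := ⟨hu.trans (huv.trans hvv').le, hv'⟩
  have hs : (f v' - f u) / (v' - u) < (f v - f u) / (v - u) :=
    hconc.secant_strict_mono humem hvmem hv'mem huv.ne' (huv.trans hvv').ne' hvv'
  have hxu : 0 < x - u := sub_pos.mpr hx.1
  have hsec : secant f u v' x < secant f u v x := by
    have := mul_lt_mul_of_pos_right hs hxu
    simp only [secant]
    linarith
  have hle : f x - secant f u v' x ≤ maxErr f u v' :=
    le_maxErr hf hu (huv.trans hvv') hv' ⟨hx.1.le, hx.2.le.trans hvv'.le⟩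
  linarith

/-- Strict antitonicity in the left endpoint. -/
lemma maxErr_lt_left (hf : ContinuousOn f (Set.Icc a b))
    (hconc : StrictConcaveOn ℝ (Set.Icc a b) f)
    {u' : ℝ} (hu' : a ≤ u') (hu'u : u' < u) (huv : u < v) (hv : v ≤ b) :
    maxErr f u v < maxErr f u' v := by
  have hau : a ≤ u := hu'.trans hu'u.le
  obtain ⟨x, hx, hxe⟩ := exists_interior_max hf hconc hau huv hv
  have humem : u ∈ Set.Icc a b := ⟨hau, huv.le.trans hv⟩
  have hvmem : v ∈ Set.Icc a b := ⟨hau.trans huv.le, hv⟩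
  have hu'mem : u' ∈ Set.Icc a b := ⟨hu', ((hu'u.trans huv).le.trans hv)⟩
  -- slope(u,v) < slope(u',v)
  have hs : (f u - f v) / (u - v) < (f u' - f v) / (u' - v) :=
    hconc.secant_strict_mono hvmem hu'mem humem (hu'u.trans huv).ne huv.ne hu'u
  have hs' : (f v - f u) / (v - u) < (f v - f u') / (v - u') := by
    have e1 : (f u - f v) / (u - v) = (f v - f u) / (v - u) := by
      rw [← neg_div_neg_eq]; ring_nf
    have e2 : (f u' - f v) / (u' - v) = (f v - f u') / (v - u') := by
      rw [← neg_div_neg_eq]; ring_nf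
    rw [e1, e2] at hs; exact hs
  have hxv : x - v < 0 := sub_neg.mpr hx.2
  have hsec : secant f u' v x < secant f u v x := by
    rw [secant_eq_right f huv, secant_eq_right f (hu'u.trans huv)]
    nlinarith
  have hle : f x - secant f u' v x ≤ maxErr f u' v :=
    le_maxErr hf hu' (hu'u.trans huv) hv ⟨(hu'u.trans hx.1).le, hx.2.le⟩
  linarith

/-- Upper bound for the error on `[a,c]` for `c > c₀`, comparing with `[a,c₀]`. -/
lemma maxErr_right_bound (hf : ContinuousOn f (Set.Icc a b))
    (hconc : StrictConcaveOn ℝ (Set.Icc a b) f)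
    {c₀ c : ℝ} (hac₀ : a < c₀) (hc₀c : c₀ < c) (hcb : c ≤ b) :
    maxErr f a c ≤ maxErr f a c₀ +
      ((f c₀ - f a) / (c₀ - a) * (c - a) - (f c - f a)) := by
  set s₀ := (f c₀ - f a) / (c₀ - a) with hs₀def
  set s := (f c - f a) / (c - a) with hsdef
  have hamem : a ∈ Set.Icc a b := ⟨le_refl _, hac₀.le.trans (hc₀c.le.trans hcb)⟩
  have hc₀mem : c₀ ∈ Set.Icc a b := ⟨hac₀.le, hc₀c.le.trans hcb⟩
  have hcmem : c ∈ Set.Icc a b := ⟨(hac₀.trans hc₀c).le, hcb⟩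
  have hac : a < c := hac₀.trans hc₀c
  have hss₀ : s < s₀ :=
    hconc.secant_strict_mono hamem hc₀mem hcmem hac₀.ne' hac.ne' hc₀c
  have hca : (0:ℝ) < c - a := sub_pos.mpr hac
  have hsc : s * (c - a) = f c - f a := by
    rw [hsdef]; field_simp
  have hrhs : s₀ * (c - a) - (f c - f a) = (s₀ - s) * (c - a) := by
    rw [← hsc]; ring
  obtain ⟨x, hx, hxe⟩ := exists_interior_max hf hconc (le_refl a) hac hcb
  have hxa : 0 < x - a := sub_pos.mpr hx.1
  have hpos₀ := maxErr_pos hf hconc (le_refl a) hac₀ (hc₀c.le.trans hcb)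
  rw [hxe]
  rcases le_or_gt x c₀ with hxc₀ | hxc₀
  · -- x in [a, c₀]
    have h1 : f x - secant f a c₀ x ≤ maxErr f a c₀ :=
      le_maxErr hf (le_refl a) hac₀ (hc₀c.le.trans hcb) ⟨hx.1.le, hxc₀⟩
    have h2 : secant f a c₀ x - secant f a c x = (s₀ - s) * (x - a) := by
      simp only [secant, hs₀def, hsdef]; ring
    have h3 : (s₀ - s) * (x - a) ≤ (s₀ - s) * (c - a) := by
      have : x - a ≤ c - a := by linarith [hx.2]
      nlinarith
    rw [hrhs]
    linarith
  · -- x in (c₀, c): f x < f a + s₀ (x - a)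
    have hxmem : x ∈ Set.Icc a b := ⟨hx.1.le, hx.2.le.trans hcb⟩
    have hslope : (f x - f a) / (x - a) < s₀ :=
      hconc.secant_strict_mono hamem hc₀mem hxmem hac₀.ne' hx.1.ne' hxc₀
    have hfx : f x - f a < s₀ * (x - a) := by
      have := mul_lt_mul_of_pos_right hslope hxa
      rw [div_mul_cancel₀ _ (ne_of_gt hxa)] at this
      exact this
    have h2 : f x - secant f a c x = (f x - f a) - s * (x - a) := by
      simp only [secant, hsdef]; ring
    have h3 : (s₀ - s) * (x - a) ≤ (s₀ - s) * (c - a) := by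
      have : x - a ≤ c - a := by linarith [hx.2]
      nlinarith
    rw [hrhs]
    nlinarith

/-- Upper bound for the error on `[c,b]` for `c < c₀`, comparing with `[c₀,b]`. -/
lemma maxErr_left_bound (hf : ContinuousOn f (Set.Icc a b))
    (hconc : StrictConcaveOn ℝ (Set.Icc a b) f)
    {c₀ c : ℝ} (hac : a ≤ c) (hcc₀ : c < c₀) (hc₀b : c₀ < b) :
    maxErr f c b ≤ maxErr f c₀ b +
      ((f b - f c) - (f b - f c₀) / (b - c₀) * (b - c)) := by
  set t₀ := (f b - f c₀) / (b - c₀) with ht₀def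
  set t := (f b - f c) / (b - c) with htdef
  have hcb : c < b := hcc₀.trans hc₀b
  have hbmem : b ∈ Set.Icc a b := ⟨hac.trans hcb.le, le_refl _⟩
  have hc₀mem : c₀ ∈ Set.Icc a b := ⟨hac.trans hcc₀.le, hc₀b.le⟩
  have hcmem : c ∈ Set.Icc a b := ⟨hac, hcb.le⟩
  have ht₀t : t₀ < t := by
    have hs : (f c₀ - f b) / (c₀ - b) < (f c - f b) / (c - b) :=
      hconc.secant_strict_mono hbmem hcmem hc₀mem hcb.ne hc₀b.ne hcc₀
    have e1 : (f c - f b) / (c - b) = t := by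
      rw [htdef, ← neg_div_neg_eq]; ring_nf
    have e2 : (f c₀ - f b) / (c₀ - b) = t₀ := by
      rw [ht₀def, ← neg_div_neg_eq]; ring_nf
    rw [e1, e2] at hs; exact hs
  have hbc : (0:ℝ) < b - c := sub_pos.mpr hcb
  have htc : t * (b - c) = f b - f c := by
    rw [htdef]; field_simp
  have hrhs : (f b - f c) - t₀ * (b - c) = (t - t₀) * (b - c) := by
    rw [← htc]; ring
  obtain ⟨x, hx, hxe⟩ := exists_interior_max hf hconc hac hcb (le_refl b)
  have hxb : 0 < b - x := sub_pos.mpr hx.2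
  have hpos₀ := maxErr_pos hf hconc (hac.trans hcc₀.le) hc₀b (le_refl b)
  have hsecx : secant f c b x = f b + t * (x - b) := by
    rw [secant_eq_right f hcb, htdef]
  rw [hxe]
  rcases le_or_gt c₀ x with hc₀x | hc₀x
  · have h1 : f x - secant f c₀ b x ≤ maxErr f c₀ b :=
      le_maxErr hf (hac.trans hcc₀.le) hc₀b (le_refl b) ⟨hc₀x, hx.2.le⟩
    have h2 : secant f c₀ b x - secant f c b x = (t - t₀) * (b - x) := by
      rw [hsecx, secant_eq_right f hc₀b, ← ht₀def]; ring
    have h3 : (t - t₀) * (b - x) ≤ (t - t₀) * (b - c) := by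
      have : b - x ≤ b - c := by linarith [hx.1]
      nlinarith
    rw [hrhs]
    linarith
  · -- x < c₀ : f x < f b + t₀ (x - b)
    have hxmem : x ∈ Set.Icc a b := ⟨hac.trans hx.1.le, hx.2.le⟩
    have hs : (f c₀ - f b) / (c₀ - b) < (f x - f b) / (x - b) :=
      hconc.secant_strict_mono hbmem hxmem hc₀mem hx.2.ne hc₀b.ne hc₀x
    have e2 : (f c₀ - f b) / (c₀ - b) = t₀ := by
      rw [ht₀def, ← neg_div_neg_eq]; ring_nf
    rw [e2] at hs
    have hfx : f x - f b < t₀ * (x - b) := by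
      have hxb' : x - b < 0 := by linarith
      have := mul_lt_mul_of_neg_right hs hxb'
      rw [div_mul_cancel₀ _ (ne_of_lt hxb')] at this
      linarith
    have h2 : f x - secant f c b x = (f x - f b) - t * (x - b) := by
      rw [hsecx]; ring
    have h3 : (t - t₀) * (b - x) ≤ (t - t₀) * (b - c) := by
      have : b - x ≤ b - c := by linarith [hx.1]
      nlinarith
    rw [hrhs]
    nlinarith

/-- At the optimum the two errors are equal. -/
lemma maxErr_eq_at_opt (f : ℝ → ℝ) (a b : ℝ) (hab : a < b)
    (hf : ContinuousOn f (Set.Icc a b))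
    (hconc : StrictConcaveOn ℝ (Set.Icc a b) f)
    (c₀ : ℝ) (hc₀ : c₀ ∈ Set.Ioo a b)
    (hmin : ∀ c ∈ Set.Ioo a b,
      max (maxErr f a c₀) (maxErr f c₀ b) ≤ max (maxErr f a c) (maxErr f c b)) :
    maxErr f a c₀ = maxErr f c₀ b := by
  obtain ⟨hac₀, hc₀b⟩ := hc₀
  set M₁ := maxErr f a c₀ with hM₁
  set M₂ := maxErr f c₀ b with hM₂
  rcases lt_trichotomy M₁ M₂ with h | h | h
  · -- M₁ < M₂ : contradiction via c → c₀⁺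
    exfalso
    have key : ∀ c ∈ Set.Ioo c₀ b,
        M₂ ≤ M₁ + ((f c₀ - f a) / (c₀ - a) * (c - a) - (f c - f a)) := by
      intro c hc
      have hcmem : c ∈ Set.Ioo a b := ⟨hac₀.trans hc.1, hc.2⟩
      have h1 := hmin c hcmem
      rw [max_eq_right h.le] at h1
      have h2 : maxErr f c b < M₂ :=
        maxErr_lt_left hf hconc hac₀.le hc.1 hc.2 (le_refl b)
      have h3 : M₂ ≤ maxErr f a c := by
        rcases max_cases (maxErr f a c) (maxErr f c b) with ⟨he, _⟩ | ⟨he, _⟩ <;>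
          rw [he] at h1 <;> linarith
      have h4 := maxErr_right_bound hf hconc hac₀ hc.1 hc.2.le
      linarith
    -- take the limit c → c₀⁺
    have hmemIoo : Set.Ioo c₀ b ∈ 𝓝[>] c₀ := Ioo_mem_nhdsGT_of_mem ⟨le_refl _, hc₀b⟩
    have hIccmem : Set.Icc a b ∈ 𝓝[>] c₀ :=
      Filter.mem_of_superset hmemIoo
        (fun x hx => ⟨hac₀.le.trans hx.1.le, hx.2.le⟩)
    have hftend : Filter.Tendsto f (𝓝[>] c₀) (𝓝 (f c₀)) := by
      have h0 : Filter.Tendsto f (𝓝[Set.Icc a b] c₀) (𝓝 (f c₀)) :=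
        hf.continuousWithinAt ⟨hac₀.le, hc₀b.le⟩
      exact h0.mono_left (nhdsWithin_le_iff.mpr hIccmem)
    have htend : Filter.Tendsto
        (fun c => M₁ + ((f c₀ - f a) / (c₀ - a) * (c - a) - (f c - f a)))
        (𝓝[>] c₀) (𝓝 (M₁ + ((f c₀ - f a) / (c₀ - a) * (c₀ - a) - (f c₀ - f a)))) := by
      apply Filter.Tendsto.const_add
      apply Filter.Tendsto.sub
      · exact (Filter.Tendsto.const_mul _
          ((continuous_id.sub continuous_const).continuousAt.tendsto.mono_left
            nhdsWithin_le_nhds))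
      · exact (hftend.sub tendsto_const_nhds)
    have hzero : (f c₀ - f a) / (c₀ - a) * (c₀ - a) - (f c₀ - f a) = 0 := by
      rw [div_mul_cancel₀ _ (ne_of_gt (sub_pos.mpr hac₀))]; ring
    rw [hzero, add_zero] at htend
    have : M₂ ≤ M₁ :=
      ge_of_tendsto htend (Filter.eventually_iff_exists_mem.mpr
        ⟨Set.Ioo c₀ b, hmemIoo, fun c hc => key c hc⟩)
    linarith
  · exact h
  · -- M₂ < M₁ : contradiction via c → c₀⁻
    exfalso
    have key : ∀ c ∈ Set.Ioo a c₀,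
        M₁ ≤ M₂ + ((f b - f c) - (f b - f c₀) / (b - c₀) * (b - c)) := by
      intro c hc
      have hcmem : c ∈ Set.Ioo a b := ⟨hc.1, hc.2.trans hc₀b⟩
      have h1 := hmin c hcmem
      rw [max_eq_left h.le] at h1
      have h2 : maxErr f a c < M₁ :=
        maxErr_lt_right hf hconc (le_refl a) hc.1 hc.2 hc₀b.le
      have h3 : M₁ ≤ maxErr f c b := by
        rcases max_cases (maxErr f a c) (maxErr f c b) with ⟨he, _⟩ | ⟨he, _⟩ <;>
          rw [he] at h1 <;> linarith
      have h4 := maxErr_left_bound hf hconc hc.1.le hc.2 hc₀b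
      linarith
    have hmemIoo : Set.Ioo a c₀ ∈ 𝓝[<] c₀ := Ioo_mem_nhdsLT_of_mem ⟨hac₀, le_refl _⟩
    have hIccmem : Set.Icc a b ∈ 𝓝[<] c₀ :=
      Filter.mem_of_superset hmemIoo
        (fun x hx => ⟨hx.1.le, hx.2.le.trans hc₀b.le⟩)
    have hftend : Filter.Tendsto f (𝓝[<] c₀) (𝓝 (f c₀)) := by
      have h0 : Filter.Tendsto f (𝓝[Set.Icc a b] c₀) (𝓝 (f c₀)) :=
        hf.continuousWithinAt ⟨hac₀.le, hc₀b.le⟩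
      exact h0.mono_left (nhdsWithin_le_iff.mpr hIccmem)
    have htend : Filter.Tendsto
        (fun c => M₂ + ((f b - f c) - (f b - f c₀) / (b - c₀) * (b - c)))
        (𝓝[<] c₀) (𝓝 (M₂ + ((f b - f c₀) - (f b - f c₀) / (b - c₀) * (b - c₀)))) := by
      apply Filter.Tendsto.const_add
      apply Filter.Tendsto.sub
      · exact (tendsto_const_nhds.sub hftend)
      · exact (Filter.Tendsto.const_mul _
          ((continuous_const.sub continuous_id).continuousAt.tendsto.mono_left
            nhdsWithin_le_nhds))
    have hzero : (f b - f c₀) - (f b - f c₀) / (b - c₀) * (b - c₀) = 0 := by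
      rw [div_mul_cancel₀ _ (ne_of_gt (sub_pos.mpr hc₀b))]; ring
    rw [hzero, add_zero] at htend
    have : M₁ ≤ M₂ :=
      ge_of_tendsto htend (Filter.eventually_iff_exists_mem.mpr
        ⟨Set.Ioo a c₀, hmemIoo, fun c hc => key c hc⟩)
    linarith

end StraddleAux

/-- For any non-optimal interior point `c`, the errors straddle the
balanced optimal error: `min(E₁,E₂) < E(a,c°) = E(c°,b) < max(E₁,E₂)`. -/
theorem nonoptimal_errors_straddle (f : ℝ → ℝ) (a b : ℝ) (hab : a < b)
    (hf : ContinuousOn f (Set.Icc a b))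
    (hconc : StrictConcaveOn ℝ (Set.Icc a b) f)
    (c₀ : ℝ) (hc₀ : c₀ ∈ Set.Ioo a b)
    (hmin : ∀ c ∈ Set.Ioo a b,
      max (maxErr f a c₀) (maxErr f c₀ b) ≤ max (maxErr f a c) (maxErr f c b)) :
    ∀ c ∈ Set.Ioo a b, c ≠ c₀ →
      min (maxErr f a c) (maxErr f c b) < maxErr f a c₀ ∧
      maxErr f a c₀ = maxErr f c₀ b ∧
      maxErr f c₀ b < max (maxErr f a c) (maxErr f c b) := by
  intro c hc hne
  have heq := StraddleAux.maxErr_eq_at_opt f a b hab hf hconc c₀ hc₀ hmin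
  refine ⟨?_, heq, ?_⟩
  · rcases lt_or_gt_of_ne hne with hlt | hgt
    · -- c < c₀ : E(a,c) < E(a,c₀)
      have h := StraddleAux.maxErr_lt_right hf hconc (le_refl a) hc.1 hlt hc₀.2.le
      exact lt_of_le_of_lt (min_le_left _ _) h
    · -- c > c₀ : E(c,b) < E(c₀,b) = E(a,c₀)
      have h := StraddleAux.maxErr_lt_left hf hconc hc₀.1.le hgt hc.2 (le_refl b)
      rw [heq]
      exact lt_of_le_of_lt (min_le_right _ _) h
  · rcases lt_or_gt_of_ne hne with hlt | hgt
    · -- c < c₀ : E(c₀,b) < E(c,b)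
      have h := StraddleAux.maxErr_lt_left hf hconc hc.1.le hlt hc₀.2 (le_refl b)
      exact lt_of_lt_of_le h (le_max_right _ _)
    · -- c > c₀ : E(a,c₀) < E(a,c)
      have h := StraddleAux.maxErr_lt_right hf hconc (le_refl a) hc₀.1 hgt hc.2.le
      rw [← heq]
      exact lt_of_lt_of_le h (le_max_left _ _)
end

section
/- Let f : ℝ → ℝ be continuous and strictly concave on [x₁, x_N] and let N ≥ 3. Suppose the strictly increasing breakpoint vector (x₁, x₂, …, x_N), with x₁ and x_N fixed, minimizes the overall maximum absolute error max_{1 ≤ i ≤ N-1} E(x_i, x_{i+1}) over all strictly increasing choices of the interior points x₂ < ⋯ < x_{N-1} in (x₁, x_N). Then all the interval errors are equal: E(x_i, x_{i+1}) = E(x_j, x_{j+1}) for all 1 ≤ i, j ≤ N-1. -/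
open Set

lemma secant_left (f : ℝ → ℝ) (u v : ℝ) : secant f u v u = f u := by simp [secant]

lemma secant_right (f : ℝ → ℝ) {u v : ℝ} (h : u < v) : secant f u v v = f v := by
  have : v - u ≠ 0 := by linarith
  rw [secant, div_mul_cancel₀ _ this]; ring

/-- Inside the chord, a concave function lies above the secant. -/
lemma le_secant_inner {f : ℝ → ℝ} {a b u v w : ℝ}
    (hconc : ConcaveOn ℝ (Icc a b) f) (hu : a ≤ u) (hv : v ≤ b) (huv : u < v)
    (hw : w ∈ Icc u v) : secant f u v w ≤ f w := by
  obtain ⟨h1, h2⟩ := hw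
  have hvu : (0:ℝ) < v - u := by linarith
  have hmem_u : u ∈ Icc a b := ⟨hu, by linarith⟩
  have hmem_v : v ∈ Icc a b := ⟨by linarith, hv⟩
  have key := hconc.2 hmem_u hmem_v (show (0:ℝ) ≤ (v-w)/(v-u) from div_nonneg (by linarith) (by linarith))
    (show (0:ℝ) ≤ (w-u)/(v-u) from div_nonneg (by linarith) (by linarith)) (by field_simp; ring)
  have hcomb : ((v - w)/(v-u)) • u + ((w - u)/(v-u)) • v = w := by
    simp only [smul_eq_mul]; field_simp; ring
  rw [hcomb] at key
  simp only [smul_eq_mul] at key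
  have hsec : secant f u v w = (v - w)/(v-u) * f u + (w - u)/(v-u) * f v := by
    unfold secant; field_simp; ring
  linarith [key, hsec.ge]

lemma lt_secant_inner {f : ℝ → ℝ} {a b u v w : ℝ}
    (hconc : StrictConcaveOn ℝ (Icc a b) f) (hu : a ≤ u) (hv : v ≤ b) (huv : u < v)
    (hw : w ∈ Ioo u v) : secant f u v w < f w := by
  obtain ⟨h1, h2⟩ := hw
  have hvu : (0:ℝ) < v - u := by linarith
  have hmem_u : u ∈ Icc a b := ⟨hu, by linarith⟩
  have hmem_v : v ∈ Icc a b := ⟨by linarith, hv⟩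
  have key := hconc.2 hmem_u hmem_v (ne_of_lt huv) (show (0:ℝ) < (v-w)/(v-u) from div_pos (by linarith) (by linarith))
    (show (0:ℝ) < (w-u)/(v-u) from div_pos (by linarith) (by linarith)) (by field_simp; ring)
  have hcomb : ((v - w)/(v-u)) • u + ((w - u)/(v-u)) • v = w := by
    simp only [smul_eq_mul]; field_simp; ring
  rw [hcomb] at key
  simp only [smul_eq_mul] at key
  have hsec : secant f u v w = (v - w)/(v-u) * f u + (w - u)/(v-u) * f v := by
    unfold secant; field_simp; ring
  linarith [key, hsec.ge]

/-- Left of the chord, a concave function lies below the secant line. -/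
lemma outer_left {f : ℝ → ℝ} {a b u v w : ℝ}
    (hconc : ConcaveOn ℝ (Icc a b) f) (ha : a ≤ w) (hwu : w ≤ u) (huv : u < v)
    (hv : v ≤ b) : f w ≤ secant f u v w := by
  rcases eq_or_lt_of_le hwu with rfl | hwu
  · rw [secant_left]
  · have hvw : (0:ℝ) < v - w := by linarith
    have hvu : (0:ℝ) < v - u := by linarith
    have hmem_w : w ∈ Icc a b := ⟨ha, by linarith⟩
    have hmem_v : v ∈ Icc a b := ⟨by linarith, hv⟩
    have key := hconc.2 hmem_w hmem_v (show (0:ℝ) ≤ (v-u)/(v-w) from div_nonneg (by linarith) (by linarith))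
      (show (0:ℝ) ≤ (u-w)/(v-w) from div_nonneg (by linarith) (by linarith)) (by field_simp; ring)
    have hcomb : ((v - u)/(v-w)) • w + ((u - w)/(v-w)) • v = u := by
      simp only [smul_eq_mul]; field_simp; ring
    rw [hcomb] at key
    simp only [smul_eq_mul] at key
    have key2 : (v - u) * f w + (u - w) * f v ≤ (v - w) * f u := by
      have h := mul_le_mul_of_nonneg_left key (le_of_lt hvw)
      calc (v - u) * f w + (u - w) * f v
          = (v - w) * ((v - u)/(v-w) * f w + (u - w)/(v-w) * f v) := by field_simp
        _ ≤ (v - w) * f u := h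
    have hsec : secant f u v w = f u + (f v - f u)/(v-u) * (w - u) := rfl
    rw [hsec, ← sub_nonneg]
    have expand : f u + (f v - f u)/(v-u) * (w - u) - f w
        = ((v - w) * f u - (v - u) * f w - (u - w) * f v) / (v - u) := by
      field_simp; ring
    rw [expand]
    apply div_nonneg (by linarith) (by linarith)

lemma exists_max {f : ℝ → ℝ} {u v : ℝ} (hf : ContinuousOn f (Icc u v)) (huv : u ≤ v) :
    ∃ m ∈ Icc u v, (∀ z ∈ Icc u v, f z - secant f u v z ≤ f m - secant f u v m) ∧
      maxErr f u v = f m - secant f u v m := by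
  have hg : ContinuousOn (fun z => f z - secant f u v z) (Icc u v) :=
    hf.sub (Continuous.continuousOn (by unfold secant; continuity))
  obtain ⟨m, hm, hmax⟩ := isCompact_Icc.exists_isMaxOn (nonempty_Icc.mpr huv) hg
  refine ⟨m, hm, fun z hz => hmax hz, ?_⟩
  refine IsGreatest.csSup_eq ⟨mem_image_of_mem _ hm, ?_⟩
  rintro _ ⟨z, hz, rfl⟩
  exact hmax hz

/-- Right of the chord, a concave function lies below the secant line. -/
lemma outer_right {f : ℝ → ℝ} {a b u v w : ℝ}
    (hconc : ConcaveOn ℝ (Icc a b) f) (ha : a ≤ u) (huv : u < v) (hvw : v ≤ w)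
    (hb : w ≤ b) : f w ≤ secant f u v w := by
  rcases eq_or_lt_of_le hvw with rfl | hvw
  · rw [secant_right f huv]
  · have hwu : (0:ℝ) < w - u := by linarith
    have hvu : (0:ℝ) < v - u := by linarith
    have hmem_u : u ∈ Icc a b := ⟨ha, by linarith⟩
    have hmem_w : w ∈ Icc a b := ⟨by linarith, hb⟩
    have key := hconc.2 hmem_u hmem_w
      (show (0:ℝ) ≤ (w-v)/(w-u) from div_nonneg (by linarith) (by linarith))
      (show (0:ℝ) ≤ (v-u)/(w-u) from div_nonneg (by linarith) (by linarith)) (by field_simp; ring)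
    have hcomb : ((w - v)/(w-u)) • u + ((v - u)/(w-u)) • w = v := by
      simp only [smul_eq_mul]; field_simp; ring
    rw [hcomb] at key
    simp only [smul_eq_mul] at key
    have key2 : (w - v) * f u + (v - u) * f w ≤ (w - u) * f v := by
      have h := mul_le_mul_of_nonneg_left key (le_of_lt hwu)
      calc (w - v) * f u + (v - u) * f w
          = (w - u) * ((w - v)/(w-u) * f u + (v - u)/(w-u) * f w) := by field_simp
        _ ≤ (w - u) * f v := h
    have hsec : secant f u v w = f u + (f v - f u)/(v-u) * (w - u) := rfl
    rw [hsec, ← sub_nonneg]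
    have expand : f u + (f v - f u)/(v-u) * (w - u) - f w
        = ((w - u) * f v - (w - v) * f u - (v - u) * f w) / (v - u) := by
      field_simp; ring
    rw [expand]
    apply div_nonneg (by linarith) (by linarith)

lemma le_maxErr {f : ℝ → ℝ} {u v z : ℝ} (hf : ContinuousOn f (Icc u v)) (huv : u ≤ v)
    (hz : z ∈ Icc u v) : f z - secant f u v z ≤ maxErr f u v := by
  obtain ⟨m, hm, hmax, heq⟩ := exists_max hf huv
  rw [heq]; exact hmax z hz

lemma maxErr_nonneg {f : ℝ → ℝ} {u v : ℝ} (hf : ContinuousOn f (Icc u v)) (huv : u ≤ v) :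
    0 ≤ maxErr f u v := by
  have := le_maxErr hf huv (left_mem_Icc.mpr huv)
  rwa [secant_left, sub_self] at this

/-- The maximum of the error is attained at an interior point, with positive value. -/
lemma exists_interior_max {f : ℝ → ℝ} {a b u v : ℝ}
    (hf : ContinuousOn f (Icc a b)) (hconc : StrictConcaveOn ℝ (Icc a b) f)
    (ha : a ≤ u) (huv : u < v) (hb : v ≤ b) :
    ∃ m ∈ Ioo u v, (∀ z ∈ Icc u v, f z - secant f u v z ≤ f m - secant f u v m) ∧
      maxErr f u v = f m - secant f u v m ∧ 0 < maxErr f u v := by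
  have hsub : Icc u v ⊆ Icc a b := Icc_subset_Icc ha hb
  obtain ⟨m, hm, hmax, heq⟩ := exists_max (hf.mono hsub) huv.le
  have hmid : (u + v)/2 ∈ Ioo u v := ⟨by linarith, by linarith⟩
  have hpos : 0 < f ((u+v)/2) - secant f u v ((u+v)/2) :=
    sub_pos.mpr (lt_secant_inner hconc ha hb huv hmid)
  have hgm : 0 < f m - secant f u v m :=
    lt_of_lt_of_le hpos (hmax _ (Ioo_subset_Icc_self hmid))
  have hmu : m ≠ u := by
    rintro rfl; rw [secant_left, sub_self] at hgm; exact lt_irrefl _ hgm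
  have hmv : m ≠ v := by
    rintro rfl; rw [secant_right f huv, sub_self] at hgm; exact lt_irrefl _ hgm
  exact ⟨m, ⟨lt_of_le_of_ne hm.1 (Ne.symm hmu), lt_of_le_of_ne hm.2 hmv⟩,
    hmax, heq, heq ▸ hgm⟩

/-- Strictly shrinking the right endpoint strictly decreases the error. -/
lemma maxErr_lt_right {f : ℝ → ℝ} {a b u v v' : ℝ}
    (hf : ContinuousOn f (Icc a b)) (hconc : StrictConcaveOn ℝ (Icc a b) f)
    (ha : a ≤ u) (huv' : u < v') (hv' : v' < v) (hb : v ≤ b) :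
    maxErr f u v' < maxErr f u v := by
  obtain ⟨m, hm, hmax, heq, hpos⟩ := exists_interior_max hf hconc ha huv' (by linarith)
  have huv : u < v := lt_trans huv' hv'
  -- secants through (u, f u); slope of [u,v'] secant is bigger
  have hs : (f v - f u)/(v - u) < (f v' - f u)/(v' - u) := by
    have hfv' : secant f u v v' < f v' :=
      lt_secant_inner hconc ha hb huv ⟨huv', hv'⟩
    rw [secant] at hfv'
    have hne : v - u ≠ 0 := by linarith
    rw [div_lt_div_iff₀ (by linarith) (by linarith)]
    calc (f v - f u) * (v' - u) = ((f v - f u)/(v - u) * (v' - u)) * (v - u) := by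
          field_simp
      _ < (f v' - f u) * (v - u) :=
          mul_lt_mul_of_pos_right (by linarith) (by linarith)
  have hlt : secant f u v m < secant f u v' m := by
    unfold secant
    have := mul_lt_mul_of_pos_right hs (show (0:ℝ) < m - u by linarith [hm.1])
    linarith
  have : f m - secant f u v m ≤ maxErr f u v := by
    refine le_maxErr (hf.mono (Icc_subset_Icc ha hb)) huv.le ⟨hm.1.le, ?_⟩
    linarith [hm.2]
  linarith [heq ▸ (show f m - secant f u v' m < f m - secant f u v m by linarith)]

/-- Strictly shrinking the left endpoint strictly decreases the error. -/
lemma maxErr_lt_left {f : ℝ → ℝ} {a b u u' v : ℝ}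
    (hf : ContinuousOn f (Icc a b)) (hconc : StrictConcaveOn ℝ (Icc a b) f)
    (ha : a ≤ u) (huu' : u < u') (hu'v : u' < v) (hb : v ≤ b) :
    maxErr f u' v < maxErr f u v := by
  obtain ⟨m, hm, hmax, heq, hpos⟩ := exists_interior_max hf hconc (by linarith : a ≤ u') hu'v hb
  have huv : u < v := lt_trans huu' hu'v
  -- both secants pass through (v, f v)
  have hfu' : secant f u v u' < f u' := lt_secant_inner hconc ha hb huv ⟨huu', hu'v⟩
  have hlt : secant f u v m < secant f u' v m := by
    -- write both secants in terms of the right endpoint v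
    have hne : v - u ≠ 0 := by linarith
    have hne' : v - u' ≠ 0 := by linarith
    have h1 : secant f u v m = f v + ((f v - f u)/(v - u)) * (m - v) := by
      unfold secant; field_simp; ring
    have h2 : secant f u' v m = f v + ((f v - f u')/(v - u')) * (m - v) := by
      unfold secant; field_simp; ring
    have hs : (f v - f u')/(v - u') < (f v - f u)/(v - u) := by
      rw [secant] at hfu'
      rw [div_lt_div_iff₀ (by linarith) (by linarith)]
      calc (f v - f u') * (v - u)
          = (f v - f u) * (v - u) - (f u' - f u) * (v - u) := by ring
        _ < (f v - f u) * (v - u) - ((f v - f u)/(v - u) * (u' - u)) * (v - u) := by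
            have : (f v - f u)/(v - u) * (u' - u) < f u' - f u := by linarith
            nlinarith [mul_lt_mul_of_pos_right this (show (0:ℝ) < v - u by linarith)]
        _ = (f v - f u) * (v - u') := by field_simp; ring
    have := mul_lt_mul_of_pos_left hs (show (0:ℝ) < v - m by linarith [hm.2])
    nlinarith [this]
  have : f m - secant f u v m ≤ maxErr f u v := by
    refine le_maxErr (hf.mono (Icc_subset_Icc ha hb)) huv.le ⟨by linarith [hm.1], hm.2.le⟩
  linarith [heq ▸ (show f m - secant f u' v m < f m - secant f u v m by linarith)]

lemma linear_le_max {α β p q z : ℝ} (h1 : p ≤ z) (h2 : z ≤ q) :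
    α * z + β ≤ max (α * p + β) (α * q + β) := by
  rcases le_total 0 α with hα | hα
  · exact le_max_of_le_right (by nlinarith)
  · exact le_max_of_le_left (by nlinarith)

/-- Extending the interval to the left increases the error by at most the
gap between the secant and `f` at the new left endpoint. -/
lemma maxErr_left_bound {f : ℝ → ℝ} {a b u u' v : ℝ}
    (hf : ContinuousOn f (Icc a b)) (hconc : ConcaveOn ℝ (Icc a b) f)
    (ha : a ≤ u') (hu' : u' < u) (huv : u < v) (hb : v ≤ b) :
    maxErr f u' v ≤ maxErr f u v + (secant f u v u' - f u') := by
  have hu'v : u' < v := lt_trans hu' huv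
  have hfuv : ContinuousOn f (Icc u v) := hf.mono (Icc_subset_Icc (by linarith) hb)
  have hE0 : 0 ≤ maxErr f u v := maxErr_nonneg hfuv huv.le
  have hgap : 0 ≤ secant f u v u' - f u' :=
    sub_nonneg.mpr (outer_left hconc ha hu'.le huv hb)
  apply csSup_le (Nonempty.image _ (nonempty_Icc.mpr hu'v.le))
  rintro _ ⟨z, hz, rfl⟩
  show f z - secant f u' v z ≤ _
  -- first part : f z - secant f u v z ≤ maxErr f u v
  have part1 : f z - secant f u v z ≤ maxErr f u v := by
    rcases le_total u z with h | h
    · exact le_maxErr hfuv huv.le ⟨h, hz.2⟩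
    · have := outer_left hconc (by linarith [hz.1] : a ≤ z) h huv hb
      linarith
  -- second part : secant f u v z - secant f u' v z ≤ secant f u v u' - f u'
  have part2 : secant f u v z - secant f u' v z ≤ secant f u v u' - f u' := by
    set s1 := (f v - f u)/(v - u) with hs1
    set s2 := (f v - f u')/(v - u') with hs2
    have hform : ∀ t, secant f u v t - secant f u' v t
        = (s1 - s2) * t + ((f u - s1 * u) - (f u' - s2 * u')) := by
      intro t; unfold secant; ring
    have h0 := linear_le_max (α := s1 - s2) (β := (f u - s1 * u) - (f u' - s2 * u'))
      hz.1 hz.2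
    rw [← hform z, ← hform u', ← hform v] at h0
    rw [secant_right f huv, secant_right f hu'v, sub_self, secant_left] at h0
    exact le_trans h0 (by simp [hgap])
  linarith

/-- Extending the interval to the right increases the error by at most the
gap between the secant and `f` at the new right endpoint. -/
lemma maxErr_right_bound {f : ℝ → ℝ} {a b u v v' : ℝ}
    (hf : ContinuousOn f (Icc a b)) (hconc : ConcaveOn ℝ (Icc a b) f)
    (ha : a ≤ u) (huv : u < v) (hv' : v < v') (hb : v' ≤ b) :
    maxErr f u v' ≤ maxErr f u v + (secant f u v v' - f v') := by
  have huv' : u < v' := lt_trans huv hv'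
  have hfuv : ContinuousOn f (Icc u v) := hf.mono (Icc_subset_Icc ha (by linarith))
  have hE0 : 0 ≤ maxErr f u v := maxErr_nonneg hfuv huv.le
  have hgap : 0 ≤ secant f u v v' - f v' :=
    sub_nonneg.mpr (outer_right hconc ha huv hv'.le hb)
  apply csSup_le (Nonempty.image _ (nonempty_Icc.mpr huv'.le))
  rintro _ ⟨z, hz, rfl⟩
  show f z - secant f u v' z ≤ _
  have part1 : f z - secant f u v z ≤ maxErr f u v := by
    rcases le_total z v with h | h
    · exact le_maxErr hfuv huv.le ⟨hz.1, h⟩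
    · have := outer_right hconc ha huv h (by linarith [hz.2] : z ≤ b)
      linarith
  have part2 : secant f u v z - secant f u v' z ≤ secant f u v v' - f v' := by
    set s1 := (f v - f u)/(v - u) with hs1
    set s2 := (f v' - f u)/(v' - u) with hs2
    have hform : ∀ t, secant f u v t - secant f u v' t
        = (s1 - s2) * t + ((f u - s1 * u) - (f u - s2 * u)) := by
      intro t; unfold secant; ring
    have h0 := linear_le_max (α := s1 - s2) (β := (f u - s1 * u) - (f u - s2 * u))
      hz.1 hz.2
    rw [← hform z, ← hform u, ← hform v'] at h0
    rw [secant_left, secant_left, sub_self, secant_right f huv'] at h0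
    exact le_trans h0 (by simp [hgap])
  linarith

/-- One-sided continuity: if the error on `[u,v]` is `< M`, we can move the left
endpoint a bit to the left keeping the error `< M`. -/
lemma cont_left {f : ℝ → ℝ} {a b p u v M : ℝ}
    (hf : ContinuousOn f (Icc a b)) (hconc : ConcaveOn ℝ (Icc a b) f)
    (ha : a ≤ p) (hpu : p < u) (huv : u < v) (hb : v ≤ b)
    (hE : maxErr f u v < M) :
    ∃ u', p < u' ∧ u' < u ∧ maxErr f u' v < M := by
  set ε := M - maxErr f u v with hε
  have hεpos : 0 < ε := by simp [hε]; linarith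
  set h : ℝ → ℝ := fun s => secant f u v s - f s with hh
  have hcont : ContinuousOn h (Icc a b) :=
    (Continuous.continuousOn (by unfold secant; continuity)).sub hf
  have humem : u ∈ Icc a b := ⟨by linarith, by linarith⟩
  have htend : Filter.Tendsto h (nhdsWithin u (Icc a b)) (nhds (h u)) := hcont u humem
  have hu0 : h u = 0 := by simp [hh, secant_left]
  have hsub : Ioo p u ⊆ Icc a b := fun z hz => ⟨by linarith [hz.1], by linarith [hz.2]⟩
  have htend2 : Filter.Tendsto h (nhdsWithin u (Ioo p u)) (nhds 0) := by
    rw [← hu0]; exact htend.mono_left (nhdsWithin_mono u hsub)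
  have hev : ∀ᶠ s in nhdsWithin u (Ioo p u), h s < ε :=
    htend2.eventually_lt_const hεpos
  have hne : (nhdsWithin u (Ioo p u)).NeBot := right_nhdsWithin_Ioo_neBot hpu
  obtain ⟨u', hu'ε, hu'mem⟩ := (hev.and self_mem_nhdsWithin).exists
  refine ⟨u', hu'mem.1, hu'mem.2, ?_⟩
  have := maxErr_left_bound hf hconc (by linarith [hu'ε] : a ≤ u')
    hu'mem.2 huv hb
  have : maxErr f u' v ≤ maxErr f u v + h u' := this
  simp only [hε] at hεpos ⊢
  linarith [hu'ε]

/-- One-sided continuity on the right. -/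
lemma cont_right {f : ℝ → ℝ} {a b u v q M : ℝ}
    (hf : ContinuousOn f (Icc a b)) (hconc : ConcaveOn ℝ (Icc a b) f)
    (ha : a ≤ u) (huv : u < v) (hvq : v < q) (hb : q ≤ b)
    (hE : maxErr f u v < M) :
    ∃ v', v < v' ∧ v' < q ∧ maxErr f u v' < M := by
  set ε := M - maxErr f u v with hε
  have hεpos : 0 < ε := by simp [hε]; linarith
  set h : ℝ → ℝ := fun s => secant f u v s - f s with hh
  have hcont : ContinuousOn h (Icc a b) :=
    (Continuous.continuousOn (by unfold secant; continuity)).sub hf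
  have hvmem : v ∈ Icc a b := ⟨by linarith, by linarith⟩
  have htend : Filter.Tendsto h (nhdsWithin v (Icc a b)) (nhds (h v)) := hcont v hvmem
  have hv0 : h v = 0 := by simp [hh, secant_right f huv]
  have hsub : Ioo v q ⊆ Icc a b := fun z hz => ⟨by linarith [hz.1], by linarith [hz.2]⟩
  have htend2 : Filter.Tendsto h (nhdsWithin v (Ioo v q)) (nhds 0) := by
    rw [← hv0]; exact htend.mono_left (nhdsWithin_mono v hsub)
  have hev : ∀ᶠ s in nhdsWithin v (Ioo v q), h s < ε :=
    htend2.eventually_lt_const hεpos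
  have hne : (nhdsWithin v (Ioo v q)).NeBot := left_nhdsWithin_Ioo_neBot hvq
  obtain ⟨v', hv'ε, hv'mem⟩ := (hev.and self_mem_nhdsWithin).exists
  refine ⟨v', hv'mem.1, hv'mem.2, ?_⟩
  have := maxErr_right_bound hf hconc ha huv hv'mem.1
    (by linarith [hv'mem.2] : v' ≤ b)
  have : maxErr f u v' ≤ maxErr f u v + h v' := this
  simp only [hε] at hεpos ⊢
  linarith [hv'ε]


/-- At an optimal breakpoint vector (minimizing the overall maximum
absolute error, endpoints fixed), all interval errors are equal. -/
theorem optimal_breakpoints_equal_errors (f : ℝ → ℝ) (N : ℕ) (hN : 3 ≤ N)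
    (x : ℕ → ℝ)
    (hmono : ∀ i j, i < j → j ≤ N - 1 → x i < x j)
    (hf : ContinuousOn f (Set.Icc (x 0) (x (N - 1))))
    (hconc : StrictConcaveOn ℝ (Set.Icc (x 0) (x (N - 1))) f)
    (hopt : ∀ y : ℕ → ℝ, y 0 = x 0 → y (N - 1) = x (N - 1) →
      (∀ i j, i < j → j ≤ N - 1 → y i < y j) →
      (Finset.range (N - 1)).sup' (Finset.nonempty_range_iff.mpr (by omega))
        (fun i => maxErr f (x i) (x (i + 1))) ≤
      (Finset.range (N - 1)).sup' (Finset.nonempty_range_iff.mpr (by omega))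
        (fun i => maxErr f (y i) (y (i + 1)))) :
    ∀ i j, i < N - 1 → j < N - 1 →
      maxErr f (x i) (x (i + 1)) = maxErr f (x j) (x (j + 1)) := by
  intro i0 j0 hi0 hj0
  by_contra hne0
  set n := N - 1 with hn
  have hn2 : 2 ≤ n := by omega
  set M := (Finset.range n).sup' (Finset.nonempty_range_iff.mpr (by omega))
    (fun i => maxErr f (x i) (x (i + 1))) with hM
  have hle : ∀ i, i < n → maxErr f (x i) (x (i + 1)) ≤ M := by
    intro i hi
    rw [hM]
    exact Finset.le_sup' (fun i => maxErr f (x i) (x (i + 1))) (Finset.mem_range.mpr hi)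
  -- main step : no interval can have error < M
  have key : ∀ k, k < n → maxErr f (x k) (x (k + 1)) < M → False := by
    intro k hk hkM
    -- admissible configurations with a window of strictly-smaller errors
    set Good : ℕ → ℕ → Prop := fun l r => ∃ y : ℕ → ℝ,
      y 0 = x 0 ∧ y n = x n ∧ (∀ i j, i < j → j ≤ n → y i < y j) ∧
      (∀ i, i < n → maxErr f (y i) (y (i + 1)) ≤ M) ∧
      (∀ i, l ≤ i → i < r → maxErr f (y i) (y (i + 1)) < M) with hGood
    have stepL : ∀ l r, 1 ≤ l → l < r → r ≤ n → Good l r → Good (l - 1) r := by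
      rintro l r hl hlr hrn ⟨y, h0, hNend, hmy, hleM, hwin⟩
      have hln : l < n := lt_of_lt_of_le hlr hrn
      have mono' : ∀ i j, i ≤ j → j ≤ n → y i ≤ y j := by
        intro i j hij hj
        rcases eq_or_lt_of_le hij with rfl | h
        · exact le_refl _
        · exact (hmy i j h hj).le
      have ha1 : x 0 ≤ y (l - 1) := h0 ▸ mono' 0 (l - 1) (by omega) (by omega)
      have hb1 : y (l + 1) ≤ x n := hNend ▸ mono' (l + 1) n (by omega) le_rfl
      have hpu : y (l - 1) < y l := hmy (l - 1) l (by omega) (by omega)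
      have huv : y l < y (l + 1) := hmy l (l + 1) (by omega) (by omega)
      have hEl : maxErr f (y l) (y (l + 1)) < M := hwin l le_rfl hlr
      obtain ⟨u', hpu', hu'u, hu'M⟩ :=
        cont_left hf hconc.concaveOn ha1 hpu huv hb1 hEl
      refine ⟨Function.update y l u', ?_, ?_, ?_, ?_, ?_⟩
      · rw [Function.update_of_ne (by omega : (0:ℕ) ≠ l)]; exact h0
      · rw [Function.update_of_ne (by omega : n ≠ l)]; exact hNend
      · intro i j hij hj
        by_cases hil : i = l
        · by_cases hjl : j = l
          · omega
          · rw [hil, Function.update_self, Function.update_of_ne hjl]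
            exact lt_trans hu'u (hmy l j (by omega) hj)
        · by_cases hjl : j = l
          · rw [hjl, Function.update_self, Function.update_of_ne hil]
            exact lt_of_le_of_lt (mono' i (l - 1) (by omega) (by omega)) hpu'
          · rw [Function.update_of_ne hil, Function.update_of_ne hjl]
            exact hmy i j hij hj
      · intro i hi
        by_cases hil : i = l
        · rw [hil, Function.update_self, Function.update_of_ne (by omega : l + 1 ≠ l)]
          exact hu'M.le
        · rcases eq_or_ne i (l - 1) with hi' | hi'
          · subst hi'
            rw [Function.update_of_ne (by omega : l - 1 ≠ l),
              (by omega : l - 1 + 1 = l), Function.update_self]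
            refine le_of_lt (lt_of_lt_of_le ?_ (hleM (l - 1) (by omega)))
            rw [(by omega : l - 1 + 1 = l)]
            exact maxErr_lt_right hf hconc ha1 hpu' hu'u
              (hNend ▸ mono' l n (by omega) le_rfl)
          · rw [Function.update_of_ne hil, Function.update_of_ne (by omega : i + 1 ≠ l)]
            exact hleM i hi
      · intro i hli hir
        by_cases hil : i = l
        · rw [hil, Function.update_self, Function.update_of_ne (by omega : l + 1 ≠ l)]
          exact hu'M
        · rcases eq_or_ne i (l - 1) with hi' | hi'
          · subst hi'
            rw [Function.update_of_ne (by omega : l - 1 ≠ l),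
              (by omega : l - 1 + 1 = l), Function.update_self]
            refine lt_of_lt_of_le ?_ (hleM (l - 1) (by omega))
            rw [(by omega : l - 1 + 1 = l)]
            exact maxErr_lt_right hf hconc ha1 hpu' hu'u
              (hNend ▸ mono' l n (by omega) le_rfl)
          · rw [Function.update_of_ne hil, Function.update_of_ne (by omega : i + 1 ≠ l)]
            exact hwin i (by omega) hir
    have stepR : ∀ l r, l < r → r < n → Good l r → Good l (r + 1) := by
      rintro l r hlr hrn ⟨y, h0, hNend, hmy, hleM, hwin⟩
      have hr1 : 1 ≤ r := by omega
      have mono' : ∀ i j, i ≤ j → j ≤ n → y i ≤ y j := by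
        intro i j hij hj
        rcases eq_or_lt_of_le hij with rfl | h
        · exact le_refl _
        · exact (hmy i j h hj).le
      have ha1 : x 0 ≤ y (r - 1) := h0 ▸ mono' 0 (r - 1) (by omega) (by omega)
      have hb1 : y (r + 1) ≤ x n := hNend ▸ mono' (r + 1) n (by omega) le_rfl
      have huv : y (r - 1) < y r := hmy (r - 1) r (by omega) (by omega)
      have hvq : y r < y (r + 1) := hmy r (r + 1) (by omega) (by omega)
      have hEr : maxErr f (y (r - 1)) (y r) < M := by
        have := hwin (r - 1) (by omega) (by omega)
        rwa [(by omega : r - 1 + 1 = r)] at this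
      obtain ⟨v', hvv', hv'q, hv'M⟩ :=
        cont_right hf hconc.concaveOn ha1 huv hvq hb1 hEr
      refine ⟨Function.update y r v', ?_, ?_, ?_, ?_, ?_⟩
      · rw [Function.update_of_ne (by omega : (0:ℕ) ≠ r)]; exact h0
      · rw [Function.update_of_ne (by omega : n ≠ r)]; exact hNend
      · intro i j hij hj
        by_cases hir : i = r
        · by_cases hjr : j = r
          · omega
          · rw [hir, Function.update_self, Function.update_of_ne hjr]
            exact lt_of_lt_of_le hv'q (mono' (r + 1) j (by omega) hj)
        · by_cases hjr : j = r
          · rw [hjr, Function.update_self, Function.update_of_ne hir]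
            exact lt_of_le_of_lt (mono' i r (by omega) (by omega)) hvv'
          · rw [Function.update_of_ne hir, Function.update_of_ne hjr]
            exact hmy i j hij hj
      · intro i hi
        by_cases hir : i = r
        · rw [hir, Function.update_self, Function.update_of_ne (by omega : r + 1 ≠ r)]
          refine le_of_lt (lt_of_lt_of_le ?_ (hleM r (by omega)))
          exact maxErr_lt_left hf hconc (h0 ▸ mono' 0 r (by omega) (by omega))
            hvv' hv'q hb1
        · rcases eq_or_ne i (r - 1) with hi' | hi'
          · subst hi'
            rw [Function.update_of_ne (by omega : r - 1 ≠ r),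
              (by omega : r - 1 + 1 = r), Function.update_self]
            exact hv'M.le
          · rw [Function.update_of_ne hir, Function.update_of_ne (by omega : i + 1 ≠ r)]
            exact hleM i hi
      · intro i hli hir'
        by_cases hir : i = r
        · rw [hir, Function.update_self, Function.update_of_ne (by omega : r + 1 ≠ r)]
          refine lt_of_lt_of_le ?_ (hleM r (by omega))
          exact maxErr_lt_left hf hconc (h0 ▸ mono' 0 r (by omega) (by omega))
            hvv' hv'q hb1
        · rcases eq_or_ne i (r - 1) with hi' | hi'
          · subst hi'
            rw [Function.update_of_ne (by omega : r - 1 ≠ r),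
              (by omega : r - 1 + 1 = r), Function.update_self]
            exact hv'M
          · rw [Function.update_of_ne hir, Function.update_of_ne (by omega : i + 1 ≠ r)]
            exact hwin i hli (by omega)
    -- go all the way to the left
    have down : ∀ s, s ≤ k → Good (k - s) (k + 1) := by
      intro s
      induction s with
      | zero =>
        intro _
        refine ⟨x, rfl, rfl, hmono, hle, ?_⟩
        intro i h1 h2
        have : i = k := by omega
        subst this; exact hkM
      | succ s ih =>
        intro hs
        have h := stepL (k - s) (k + 1) (by omega) (by omega) (by omega) (ih (by omega))
        have : k - s - 1 = k - (s + 1) := by omega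
        rwa [this] at h
    have h0k : Good 0 (k + 1) := by
      have := down k le_rfl
      rwa [Nat.sub_self] at this
    have up : ∀ t, k + 1 + t ≤ n → Good 0 (k + 1 + t) := by
      intro t
      induction t with
      | zero => intro _; exact h0k
      | succ t ih =>
        intro ht
        have h := stepR 0 (k + 1 + t) (by omega) (by omega) (ih (by omega))
        rwa [(by omega : k + 1 + t + 1 = k + 1 + (t + 1))] at h
    obtain ⟨y, hy0, hyn, hymono, _, hyall⟩ := by
      have := up (n - (k + 1)) (by omega)
      rwa [(by omega : k + 1 + (n - (k + 1)) = n)] at this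
    have hsup := hopt y hy0 hyn hymono
    have hlt : (Finset.range (N - 1)).sup' (Finset.nonempty_range_iff.mpr (by omega))
        (fun i => maxErr f (y i) (y (i + 1))) < M := by
      rw [Finset.sup'_lt_iff]
      intro i hi
      exact hyall i (Nat.zero_le _) (by have := Finset.mem_range.mp hi; omega)
    exact absurd (lt_of_le_of_lt hsup hlt) (lt_irrefl M)
  -- conclude : all errors equal M, contradiction with hne0
  rcases lt_or_gt_of_ne hne0 with h | h
  · exact key i0 hi0 (lt_of_lt_of_le h (hle j0 hj0))
  · exact key j0 hj0 (lt_of_lt_of_le h (hle i0 hi0))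
end

section
/- Let f = Real.log and let 0 < a < b. Then c = √(ab) is the unique point in (a,b) at which the two subinterval maximum absolute errors are balanced, E(a,c) = E(c,b), and √(ab) minimizes c ↦ max(E(a,c), E(c,b)) over (a,b). (For the logarithmic function, the optimal interior breakpoint under the minimal maximum absolute error criterion is the geometric mean √(ab).) -/
namespace LogBreakAux

open Real Set

/-- The interior maximizer of the log secant error. -/
noncomputable def xstar (u v : ℝ) : ℝ := (v - u) / (Real.log v - Real.log u)

lemma hL {u v : ℝ} (hu : 0 < u) (huv : u < v) : 0 < Real.log v - Real.log u :=
  sub_pos.2 (Real.log_lt_log hu huv)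

lemma xstar_mem {u v : ℝ} (hu : 0 < u) (huv : u < v) : xstar u v ∈ Set.Ioo u v := by
  have hv : 0 < v := hu.trans huv
  have hL := hL hu huv
  have h1 : Real.log (v / u) < v / u - 1 :=
    Real.log_lt_sub_one_of_pos (div_pos hv hu) (by
      intro h; rw [div_eq_one_iff_eq hu.ne'] at h; exact huv.ne' h)
  have h2 : Real.log (u / v) < u / v - 1 :=
    Real.log_lt_sub_one_of_pos (div_pos hu hv) (by
      intro h; rw [div_eq_one_iff_eq hv.ne'] at h; exact huv.ne h)
  rw [Real.log_div hv.ne' hu.ne'] at h1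
  rw [Real.log_div hu.ne' hv.ne'] at h2
  rw [Set.mem_Ioo, xstar]
  constructor
  · rw [lt_div_iff₀ hL]
    have e : u * (v / u - 1) = v - u := by field_simp
    calc u * (Real.log v - Real.log u) < u * (v / u - 1) := mul_lt_mul_of_pos_left h1 hu
      _ = v - u := e
  · rw [div_lt_iff₀ hL]
    have e : v * (u / v - 1) = u - v := by field_simp
    have h3 := mul_lt_mul_of_pos_left h2 hv
    rw [e] at h3
    have h4 : v * (Real.log u - Real.log v) = -(v * (Real.log v - Real.log u)) := by ring
    linarith

lemma isGreatest {u v : ℝ} (hu : 0 < u) (huv : u < v) :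
    IsGreatest ((fun x => Real.log x - secant Real.log u v x) '' Set.Icc u v)
      (Real.log (xstar u v) - secant Real.log u v (xstar u v)) := by
  have hv : 0 < v := hu.trans huv
  have hL := hL hu huv
  have hvu : (0:ℝ) < v - u := sub_pos.2 huv
  obtain ⟨hxu, hxv⟩ := xstar_mem hu huv
  have hx0 : 0 < xstar u v := hu.trans hxu
  constructor
  · exact ⟨xstar u v, ⟨hxu.le, hxv.le⟩, rfl⟩
  · rintro y ⟨x, ⟨hxl, hxr⟩, rfl⟩
    have hxpos : 0 < x := lt_of_lt_of_le hu hxl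
    have key : Real.log x - Real.log (xstar u v) ≤ x / xstar u v - 1 := by
      have := Real.log_le_sub_one_of_pos (div_pos hxpos hx0)
      rwa [Real.log_div hxpos.ne' hx0.ne'] at this
    have hm : (Real.log v - Real.log u) / (v - u) * xstar u v = 1 := by
      unfold xstar
      field_simp
    simp only [secant]
    have h2 : x / xstar u v - 1 =
        (Real.log v - Real.log u) / (v - u) * (x - xstar u v) := by
      have hm' : (Real.log v - Real.log u) / (v - u) = 1 / xstar u v := by
        field_simp [xstar]
        unfold xstar
        field_simp
      rw [hm']
      field_simp
    nlinarith [key, h2]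

lemma maxErr_eq {u v : ℝ} (hu : 0 < u) (huv : u < v) :
    maxErr Real.log u v =
      Real.log (v - u) - Real.log (Real.log v - Real.log u) - Real.log u - 1 +
        u * (Real.log v - Real.log u) / (v - u) := by
  have hv : 0 < v := hu.trans huv
  have hL := hL hu huv
  have hvu : (0:ℝ) < v - u := sub_pos.2 huv
  rw [maxErr, (isGreatest hu huv).csSup_eq]
  have hx0 : 0 < xstar u v := hu.trans (xstar_mem hu huv).1
  simp only [secant, xstar]
  rw [Real.log_div hvu.ne' hL.ne']
  field_simp
  ring

lemma maxErr_scale {u v t : ℝ} (hu : 0 < u) (huv : u < v) (ht : 0 < t) :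
    maxErr Real.log (t * u) (t * v) = maxErr Real.log u v := by
  have hv : 0 < v := hu.trans huv
  have huv' : t * u < t * v := by nlinarith
  rw [maxErr_eq (by positivity) huv', maxErr_eq hu huv]
  have h1 : t * v - t * u = t * (v - u) := by ring
  rw [h1, Real.log_mul ht.ne' (sub_pos.2 huv).ne',
    Real.log_mul ht.ne' hv.ne', Real.log_mul ht.ne' hu.ne']
  have h2 : Real.log t + Real.log v - (Real.log t + Real.log u) =
      Real.log v - Real.log u := by ring
  rw [h2]
  have : t * u * (Real.log v - Real.log u) / (t * (v - u)) =
      u * (Real.log v - Real.log u) / (v - u) := by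
    have h3 : v - u ≠ 0 := (sub_pos.2 huv).ne'
    field_simp
  rw [this]
  ring

lemma maxErr_lt {u v₁ v₂ : ℝ} (hu : 0 < u) (h1 : u < v₁) (h2 : v₁ < v₂) :
    maxErr Real.log u v₁ < maxErr Real.log u v₂ := by
  have hv1 : 0 < v₁ := hu.trans h1
  have hv2 : 0 < v₂ := hv1.trans h2
  set m₁ := (Real.log v₁ - Real.log u) / (v₁ - u) with hm1
  set m₂ := (Real.log v₂ - Real.log u) / (v₂ - u) with hm2
  have hslope : m₂ < m₁ :=
    strictConcaveOn_log_Ioi.secant_strict_mono (a := u) (x := v₁) (y := v₂)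
      hu hv1 hv2 h1.ne' (h1.trans h2).ne' h2
  set x₁ := xstar u v₁ with hx1
  obtain ⟨hx1u, hx1v⟩ := xstar_mem hu h1
  have hG1 := isGreatest hu h1
  have hG2 := isGreatest hu (h1.trans h2)
  have hmem : Real.log x₁ - secant Real.log u v₂ x₁ ∈
      ((fun x => Real.log x - secant Real.log u v₂ x) '' Set.Icc u v₂) :=
    ⟨x₁, ⟨hx1u.le, hx1v.le.trans h2.le⟩, rfl⟩
  have hle : Real.log x₁ - secant Real.log u v₂ x₁ ≤ maxErr Real.log u v₂ :=
    le_csSup ⟨_, fun y hy => hG2.2 hy⟩ hmem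
  have hlt : maxErr Real.log u v₁ < Real.log x₁ - secant Real.log u v₂ x₁ := by
    rw [maxErr, hG1.csSup_eq]
    have h4 : Real.log x₁ - secant Real.log u v₁ x₁ < Real.log x₁ - secant Real.log u v₂ x₁ := by
      simp only [secant, ← hm1, ← hm2]
      have : m₂ * (x₁ - u) < m₁ * (x₁ - u) :=
        mul_lt_mul_of_pos_right hslope (sub_pos.2 hx1u)
      linarith
    -- the csSup of the image equals the value at x₁? No: x₁ = xstar u v₁, and hG1 is at xstar u v₁.
    exact h4
  linarith

lemma maxErr_ratio {u v : ℝ} (hu : 0 < u) (huv : u < v) :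
    maxErr Real.log u v = maxErr Real.log 1 (v / u) := by
  have h := maxErr_scale (u := 1) (v := v / u) (t := u) one_pos
    ((one_lt_div hu).2 huv) hu
  rw [mul_one, mul_div_cancel₀ _ hu.ne'] at h
  rw [← h]

end LogBreakAux

open LogBreakAux in
/-- For `f = Real.log` on `[a,b]` with `0 < a < b`, the geometric mean
`√(ab)` is the unique balance point of the two subinterval errors and minimizes
`c ↦ max (E a c) (E c b)` over `(a,b)`. -/
theorem log_optimal_breakpoint_sqrt (a b : ℝ) (ha : 0 < a) (hab : a < b) :
    Real.sqrt (a * b) ∈ Set.Ioo a b ∧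
    maxErr Real.log a (Real.sqrt (a * b)) = maxErr Real.log (Real.sqrt (a * b)) b ∧
    (∀ c ∈ Set.Ioo a b,
      maxErr Real.log a c = maxErr Real.log c b → c = Real.sqrt (a * b)) ∧
    (∀ c ∈ Set.Ioo a b,
      max (maxErr Real.log a (Real.sqrt (a * b))) (maxErr Real.log (Real.sqrt (a * b)) b) ≤
      max (maxErr Real.log a c) (maxErr Real.log c b)) := by
  have hb : 0 < b := ha.trans hab
  set s := Real.sqrt (a * b) with hs
  have hs0 : 0 < s := Real.sqrt_pos.2 (by positivity)
  have hssq : s * s = a * b := Real.mul_self_sqrt (by positivity)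
  have has : a < s := by nlinarith [Real.sq_sqrt (mul_nonneg ha.le hb.le), hssq]
  have hsb : s < b := by nlinarith
  have hmem : s ∈ Set.Ioo a b := ⟨has, hsb⟩
  -- ratio equality : s / a = b / s
  have hratio : s / a = b / s := by
    field_simp
    nlinarith
  have hbal : maxErr Real.log a s = maxErr Real.log s b := by
    rw [maxErr_ratio ha has, maxErr_ratio hs0 hsb, hratio]
  refine ⟨hmem, hbal, ?_, ?_⟩
  · rintro c ⟨hac, hcb⟩ hEq
    have hc0 : 0 < c := ha.trans hac
    by_contra hne
    rcases lt_or_gt_of_ne hne with hlt | hgt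
    · -- c < s : E a c < E a s = E s b < E c b
      have h1 : maxErr Real.log a c < maxErr Real.log a s := maxErr_lt ha hac hlt
      have h2 : maxErr Real.log s b < maxErr Real.log c b := by
        rw [maxErr_ratio hs0 hsb, maxErr_ratio hc0 hcb]
        apply maxErr_lt one_pos ((one_lt_div hs0).2 hsb)
        rw [div_lt_div_iff₀ hs0 hc0]
        nlinarith
      linarith [hbal, hEq]
    · have h1 : maxErr Real.log a s < maxErr Real.log a c := maxErr_lt ha has hgt
      have h2 : maxErr Real.log c b < maxErr Real.log s b := by
        rw [maxErr_ratio hs0 hsb, maxErr_ratio (ha.trans hac) hcb]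
        apply maxErr_lt one_pos ((one_lt_div (ha.trans hac)).2 hcb)
        rw [div_lt_div_iff₀ (ha.trans hac) hs0]
        nlinarith
      linarith [hbal, hEq]
  · rintro c ⟨hac, hcb⟩
    have hc0 : 0 < c := ha.trans hac
    rw [hbal, max_self]
    rcases lt_trichotomy c s with hlt | heq | hgt
    · have h2 : maxErr Real.log s b < maxErr Real.log c b := by
        rw [maxErr_ratio hs0 hsb, maxErr_ratio hc0 hcb]
        apply maxErr_lt one_pos ((one_lt_div hs0).2 hsb)
        rw [div_lt_div_iff₀ hs0 hc0]
        nlinarith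
      exact h2.le.trans (le_max_right _ _)
    · subst heq; exact le_max_right _ _
    · have h1 : maxErr Real.log a s < maxErr Real.log a c := maxErr_lt ha has hgt
      rw [hbal] at h1
      exact h1.le.trans (le_max_left _ _)
end

section
/- Let f : ℝ → ℝ be continuous and strictly concave on an interval I, and for u < v in I let Θ(u,v) denote the unique maximizer of f(x) - L_{u,v}(x) over [u,v]. Then Θ is monotone in each endpoint: if a < c₁ < c₂ in I then Θ(a,c₁) ≤ Θ(a,c₂), and if a₁ < a₂ < c in I then Θ(a₁,c) ≤ Θ(a₂,c). -/
open Set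

lemma le_of_isMaxOn_sub_of_strictMono {α β : Type*} [LinearOrder α] [AddCommGroup β]
    [LinearOrder β] [IsOrderedAddMonoid β] {g ℓ₁ ℓ₂ : α → β} {a b a' b' x y : α}
    (hℓ : StrictMono fun z => ℓ₁ z - ℓ₂ z) (ha : a ≤ a') (hb : b ≤ b')
    (hx : x ∈ Icc a b) (hy : y ∈ Icc a' b')
    (hxmax : IsMaxOn (fun z => g z - ℓ₁ z) (Icc a b) x)
    (hymax : IsMaxOn (fun z => g z - ℓ₂ z) (Icc a' b') y) : x ≤ y := by
  by_contra! hyx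
  have h₁ : g y - ℓ₁ y ≤ g x - ℓ₁ x := hxmax ⟨ha.trans hy.1, hyx.le.trans hx.2⟩
  have h₂ : g x - ℓ₂ x ≤ g y - ℓ₂ y := hymax ⟨hy.1.trans hyx.le, hx.2.trans hb⟩
  have hd : ℓ₁ y - ℓ₂ y < ℓ₁ x - ℓ₂ x := hℓ hyx
  exact (add_lt_add_of_le_of_lt (add_le_add h₁ h₂) hd).ne (by abel)

lemma StrictConcaveOn.slope_strict_anti {𝕜 : Type*} [Field 𝕜] [LinearOrder 𝕜]
    [IsStrictOrderedRing 𝕜] {s : Set 𝕜} {f : 𝕜 → 𝕜} {a : 𝕜} (hf : StrictConcaveOn 𝕜 s f)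
    (ha : a ∈ s) : StrictAntiOn (slope f a) (s \ {a}) := fun x hx y hy hxy => by
  simpa only [slope_def_field] using hf.secant_strict_mono ha hx.1 hy.1 hx.2 hy.2 hxy

lemma strictMono_secant_sub_secant {f : ℝ → ℝ} {u v u' v' : ℝ}
    (h : slope f u' v' < slope f u v) :
    StrictMono fun x => secant f u v x - secant f u' v' x := by
  intro x y hxy
  have hdiff : (secant f u v y - secant f u' v' y) - (secant f u v x - secant f u' v' x) =
      (slope f u v - slope f u' v') * (y - x) := by
    simp only [secant, ← slope_def_field]
    ring
  rw [← sub_pos, hdiff]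
  exact mul_pos (sub_pos.2 h) (sub_pos.2 hxy)

theorem theta_monotone_general (f : ℝ → ℝ) (I : Set ℝ)
    (hconc : StrictConcaveOn ℝ I f)
    (Θ : ℝ → ℝ → ℝ)
    (hΘ : ∀ u ∈ I, ∀ v ∈ I, u < v →
      Θ u v ∈ Set.Icc u v ∧
      IsMaxOn (fun x => f x - secant f u v x) (Set.Icc u v) (Θ u v)) :
    (∀ a ∈ I, ∀ c₁ ∈ I, ∀ c₂ ∈ I, a < c₁ → c₁ < c₂ → Θ a c₁ ≤ Θ a c₂) ∧
    (∀ a₁ ∈ I, ∀ a₂ ∈ I, ∀ c ∈ I, a₁ < a₂ → a₂ < c → Θ a₁ c ≤ Θ a₂ c) := by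
  constructor
  · intro a ha c₁ hc₁ c₂ hc₂ hac₁ hc₁₂
    have hac₂ := hac₁.trans hc₁₂
    obtain ⟨hmem₁, hmax₁⟩ := hΘ a ha c₁ hc₁ hac₁
    obtain ⟨hmem₂, hmax₂⟩ := hΘ a ha c₂ hc₂ hac₂
    have hslope : slope f a c₂ < slope f a c₁ :=
      hconc.slope_strict_anti ha ⟨hc₁, hac₁.ne'⟩ ⟨hc₂, hac₂.ne'⟩ hc₁₂
    exact le_of_isMaxOn_sub_of_strictMono (strictMono_secant_sub_secant hslope) le_rfl hc₁₂.le
      hmem₁ hmem₂ hmax₁ hmax₂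
  · intro a₁ ha₁ a₂ ha₂ c hc ha₁₂ ha₂c
    have ha₁c := ha₁₂.trans ha₂c
    obtain ⟨hmem₁, hmax₁⟩ := hΘ a₁ ha₁ c hc ha₁c
    obtain ⟨hmem₂, hmax₂⟩ := hΘ a₂ ha₂ c hc ha₂c
    have hslope : slope f a₂ c < slope f a₁ c := by
      simpa only [slope_comm f _ c] using
        hconc.slope_strict_anti hc ⟨ha₁, ha₁c.ne⟩ ⟨ha₂, ha₂c.ne⟩ ha₁₂
    exact le_of_isMaxOn_sub_of_strictMono (strictMono_secant_sub_secant hslope) ha₁₂.le le_rfl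
      hmem₁ hmem₂ hmax₁ hmax₂

/-- The (unique) maximizer `Θ u v` of `f - L_{u,v}` on `[u,v]` is
monotone in each endpoint. -/
theorem theta_monotone (f : ℝ → ℝ) (I : Set ℝ) (hI : I.OrdConnected)
    (hf : ContinuousOn f I)
    (hconc : StrictConcaveOn ℝ I f)
    (Θ : ℝ → ℝ → ℝ)
    (hΘ : ∀ u ∈ I, ∀ v ∈ I, u < v →
      Θ u v ∈ Set.Icc u v ∧
      IsMaxOn (fun x => f x - secant f u v x) (Set.Icc u v) (Θ u v)) :
    (∀ a ∈ I, ∀ c₁ ∈ I, ∀ c₂ ∈ I, a < c₁ → c₁ < c₂ → Θ a c₁ ≤ Θ a c₂) ∧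
    (∀ a₁ ∈ I, ∀ a₂ ∈ I, ∀ c ∈ I, a₁ < a₂ → a₂ < c → Θ a₁ c ≤ Θ a₂ c) :=
  theta_monotone_general f I hconc Θ hΘ
end

section
/- Let f : ℝ → ℝ be continuous and strictly concave on [x₁, x_N], N ≥ 3, with endpoints x₁ < x_N fixed. Suppose the strictly increasing breakpoint vector (x₁, x₂, …, x_N) minimizes the total area difference error A(x₂,…,x_{N-1}) = Σ_{i=1}^{N-1} ∫_{x_i}^{x_{i+1}} (f(x) - L_{x_i, x_{i+1}}(x)) dx over all strictly increasing choices of interior points in (x₁, x_N). Then x_i = Θ(x_{i-1}, x_{i+1}) for every interior index i ∈ {2, …, N-1}. -/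
open intervalIntegral in
lemma integral_secant (f : ℝ → ℝ) {u v : ℝ} (h : u < v) :
    ∫ t in u..v, secant f u v t = (v - u) * (f u + f v) / 2 := by
  have hc : Continuous fun t : ℝ => (f v - f u)/(v-u) * (t - u) :=
    continuous_const.mul (continuous_id.sub continuous_const)
  have hvu : v - u ≠ 0 := sub_ne_zero.mpr h.ne'
  have hid : (∫ t in u..v, (t - u)) = (v - u)^2 / 2 := by
    rw [intervalIntegral.integral_comp_sub_right (fun t => t) u, integral_id]
    ring
  unfold secant
  rw [intervalIntegral.integral_add (continuous_const.intervalIntegrable _ _)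
      (hc.intervalIntegrable _ _), intervalIntegral.integral_const,
    intervalIntegral.integral_const_mul, hid]
  simp only [smul_eq_mul]
  field_simp
  ring

open intervalIntegral in
lemma two_piece (f : ℝ → ℝ) {A B a s b : ℝ} (hf : ContinuousOn f (Set.Icc A B))
    (hA : A ≤ a) (has : a < s) (hsb : s < b) (hB : b ≤ B) :
    (∫ t in a..s, (f t - secant f a s t)) + (∫ t in s..b, (f t - secant f s b t))
      = (∫ t in a..b, f t)
        - ((b - a) * (f s - secant f a b s) + (b - a) * (f a + f b)) / 2 := by
  have hsub : ∀ u v : ℝ, A ≤ u → v ≤ B → u ≤ v →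
      IntervalIntegrable f MeasureTheory.volume u v := by
    intro u v h1 h2 h3
    apply ContinuousOn.intervalIntegrable
    apply hf.mono
    rw [Set.uIcc_of_le h3]
    exact Set.Icc_subset_Icc h1 h2
  have hcs : ∀ u v : ℝ, Continuous (secant f u v) := by
    intro u v; unfold secant; fun_prop
  have i1 : IntervalIntegrable f MeasureTheory.volume a s :=
    hsub a s hA (le_trans hsb.le hB) has.le
  have i2 : IntervalIntegrable f MeasureTheory.volume s b :=
    hsub s b (le_trans hA has.le) hB hsb.le
  rw [intervalIntegral.integral_sub i1 ((hcs a s).intervalIntegrable _ _),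
    intervalIntegral.integral_sub i2 ((hcs s b).intervalIntegrable _ _),
    integral_secant f has, integral_secant f hsb]
  have hadj : (∫ t in a..s, f t) + ∫ t in s..b, f t = ∫ t in a..b, f t :=
    intervalIntegral.integral_add_adjacent_intervals i1 i2
  have hba : b - a ≠ 0 := sub_ne_zero.mpr (has.trans hsb).ne'
  unfold secant
  field_simp
  nlinarith [hadj]

lemma err_strictConcave {f : ℝ → ℝ} {A B a b : ℝ}
    (hconc : StrictConcaveOn ℝ (Set.Icc A B) f) (hA : A ≤ a) (hB : b ≤ B) :
    StrictConcaveOn ℝ (Set.Icc a b) (fun t => f t - secant f a b t) := by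
  have h1 : StrictConcaveOn ℝ (Set.Icc a b) f :=
    hconc.subset (Set.Icc_subset_Icc hA hB) (convex_Icc a b)
  have h2 : ConcaveOn ℝ (Set.Icc a b) (fun t => -(secant f a b t)) := by
    refine ⟨convex_Icc a b, ?_⟩
    intro p _ q _ α β hα hβ hab
    simp only [smul_eq_mul, secant]
    apply le_of_eq
    have h3 : β = 1 - α := by linarith
    subst h3
    ring
  have h4 := h1.add_concaveOn h2
  exact h4

open intervalIntegral in
/-- At a breakpoint vector minimizing the total area difference error
(endpoints fixed), each interior breakpoint equals `Θ` of its neighbours. -/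
theorem area_optimal_breakpoints_fixed_point (f : ℝ → ℝ) (N : ℕ) (hN : 3 ≤ N)
    (x : ℕ → ℝ)
    (hmono : ∀ i j, i < j → j ≤ N - 1 → x i < x j)
    (hf : ContinuousOn f (Set.Icc (x 0) (x (N - 1))))
    (hconc : StrictConcaveOn ℝ (Set.Icc (x 0) (x (N - 1))) f)
    (Θ : ℝ → ℝ → ℝ)
    (hΘ : ∀ u v : ℝ, u ∈ Set.Icc (x 0) (x (N - 1)) → v ∈ Set.Icc (x 0) (x (N - 1)) →
      u < v →
      Θ u v ∈ Set.Icc u v ∧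
      IsMaxOn (fun t => f t - secant f u v t) (Set.Icc u v) (Θ u v))
    (hopt : ∀ y : ℕ → ℝ, y 0 = x 0 → y (N - 1) = x (N - 1) →
      (∀ i j, i < j → j ≤ N - 1 → y i < y j) →
      ∑ i ∈ Finset.range (N - 1),
        (∫ t in (x i)..(x (i + 1)), (f t - secant f (x i) (x (i + 1)) t)) ≤
      ∑ i ∈ Finset.range (N - 1),
        (∫ t in (y i)..(y (i + 1)), (f t - secant f (y i) (y (i + 1)) t))) :
    ∀ i, 1 ≤ i → i ≤ N - 2 → x i = Θ (x (i - 1)) (x (i + 1)) := by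

  intro i hi1 hi2
  have hN1 : i + 1 ≤ N - 1 := by omega
  have hi0 : i - 1 + 1 = i := by omega
  set a := x (i - 1) with ha
  set b := x (i + 1) with hb
  have hab : a < b := hmono _ _ (by omega) hN1
  have haxi : a < x i := hmono _ _ (by omega) (by omega)
  have hxib : x i < b := hmono _ _ (by omega) hN1
  have hA : x 0 ≤ a := by
    rcases Nat.eq_zero_or_pos (i - 1) with h | h
    · rw [ha, h]
    · exact (hmono 0 (i - 1) h (by omega)).le
  have hB : b ≤ x (N - 1) := by
    rcases eq_or_lt_of_le hN1 with h | h
    · exact le_of_eq (congrArg x h)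
    · exact (hmono (i + 1) (N - 1) h le_rfl).le
  have hmem_a : a ∈ Set.Icc (x 0) (x (N - 1)) := ⟨hA, le_trans hab.le hB⟩
  have hmem_b : b ∈ Set.Icc (x 0) (x (N - 1)) := ⟨le_trans hA hab.le, hB⟩
  obtain ⟨hθmem, hθmax⟩ := hΘ a b hmem_a hmem_b hab
  set θ := Θ a b with hθ
  -- key claim: x i maximizes the error over the open interval
  have claim : ∀ t, a < t → t < b →
      f t - secant f a b t ≤ f (x i) - secant f a b (x i) := by
    intro t hat htb
    set y := Function.update x i t with hy
    have hyi : y i = t := Function.update_self _ _ _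
    have hyo : ∀ j, j ≠ i → y j = x j := fun j hj => Function.update_of_ne hj _ _
    have hymono : ∀ j k, j < k → k ≤ N - 1 → y j < y k := by
      intro j k hjk hk
      rcases eq_or_ne j i with rfl | hj
      · rw [hyi, hyo k (by omega)]
        have hxk : b ≤ x k := by
          rcases eq_or_lt_of_le (show j + 1 ≤ k by omega) with h | h
          · exact le_of_eq (congrArg x h)
          · exact le_trans (hmono (j + 1) k h hk).le le_rfl
        linarith
      · rcases eq_or_ne k i with rfl | hk'
        · rw [hyi, hyo j hj]
          have hxj : x j ≤ a := by
            rcases eq_or_lt_of_le (show j ≤ k - 1 by omega) with h | h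
            · exact le_of_eq (congrArg x h)
            · exact (hmono j (k - 1) h (by omega)).le
          linarith
        · rw [hyo j hj, hyo k hk']
          exact hmono _ _ hjk hk
    have hsum := hopt y (hyo 0 (by omega)) (hyo (N - 1) (by omega)) hymono
    have hzero : ∀ j ∈ Finset.range (N - 1), j ∉ ({i - 1, i} : Finset ℕ) →
        (∫ s in (y j)..(y (j + 1)), (f s - secant f (y j) (y (j + 1)) s)) -
        (∫ s in (x j)..(x (j + 1)), (f s - secant f (x j) (x (j + 1)) s)) = 0 := by
      intro j _ hj
      simp only [Finset.mem_insert, Finset.mem_singleton] at hj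
      push_neg at hj
      rw [hyo j hj.2, hyo (j + 1) (by omega), sub_self]
    have hsubset : ({i - 1, i} : Finset ℕ) ⊆ Finset.range (N - 1) := by
      intro j hj
      simp only [Finset.mem_insert, Finset.mem_singleton] at hj
      simp only [Finset.mem_range]
      omega
    have hpair : (∑ j ∈ Finset.range (N - 1),
        ((∫ s in (y j)..(y (j + 1)), (f s - secant f (y j) (y (j + 1)) s)) -
         (∫ s in (x j)..(x (j + 1)), (f s - secant f (x j) (x (j + 1)) s)))) =
        ((∫ s in (y (i-1))..(y (i-1+1)), (f s - secant f (y (i-1)) (y (i-1+1)) s)) -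
         (∫ s in (x (i-1))..(x (i-1+1)), (f s - secant f (x (i-1)) (x (i-1+1)) s))) +
        ((∫ s in (y i)..(y (i+1)), (f s - secant f (y i) (y (i+1)) s)) -
         (∫ s in (x i)..(x (i+1)), (f s - secant f (x i) (x (i+1)) s))) := by
      rw [← Finset.sum_subset hsubset hzero, Finset.sum_pair (by omega : i - 1 ≠ i)]
    rw [Finset.sum_sub_distrib] at hpair
    have hge : 0 ≤
        ((∫ s in (y (i-1))..(y (i-1+1)), (f s - secant f (y (i-1)) (y (i-1+1)) s)) -
         (∫ s in (x (i-1))..(x (i-1+1)), (f s - secant f (x (i-1)) (x (i-1+1)) s))) +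
        ((∫ s in (y i)..(y (i+1)), (f s - secant f (y i) (y (i+1)) s)) -
         (∫ s in (x i)..(x (i+1)), (f s - secant f (x i) (x (i+1)) s))) := by
      rw [← hpair]; linarith
    rw [hi0, hyo (i - 1) (by omega), hyi, hyo (i + 1) (by omega)] at hge
    have e1 := two_piece f hf hA haxi hxib hB
    have e2 := two_piece f hf hA hat htb hB
    have hba : 0 < b - a := by linarith
    nlinarith [hge, e1, e2]
  -- h (x i) > 0 by strict concavity (h a = h b = 0)
  have hhcon := err_strictConcave hconc hA hB
  have hxiIcc : x i ∈ Set.Icc a b := ⟨haxi.le, hxib.le⟩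
  have hba : 0 < b - a := by linarith
  have hba' : b - a ≠ 0 := hba.ne'
  have h0a : f a - secant f a b a = 0 := by unfold secant; ring
  have h0b : f b - secant f a b b = 0 := by unfold secant; field_simp; ring
  have hhxi_pos : 0 < f (x i) - secant f a b (x i) := by
    have hα : (0:ℝ) < (b - x i) / (b - a) := div_pos (by linarith) hba
    have hβ : (0:ℝ) < (x i - a) / (b - a) := div_pos (by linarith) hba
    have hsum1 : (b - x i) / (b - a) + (x i - a) / (b - a) = 1 := by field_simp; ring
    have hthis := hhcon.2 (Set.left_mem_Icc.mpr hab.le) (Set.right_mem_Icc.mpr hab.le)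
      hab.ne hα hβ hsum1
    simp only [smul_eq_mul] at hthis
    rw [show (b - x i) / (b - a) * a + (x i - a) / (b - a) * b = x i from by
      field_simp; ring] at hthis
    rw [h0a, h0b] at hthis
    simp only [mul_zero, add_zero] at hthis
    exact hthis
  have hθle : f (x i) - secant f a b (x i) ≤ f θ - secant f a b θ :=
    (isMaxOn_iff.mp hθmax) (x i) hxiIcc
  have hθpos : 0 < f θ - secant f a b θ := lt_of_lt_of_le hhxi_pos hθle
  have hθa : θ ≠ a := by intro h; rw [h, h0a] at hθpos; exact lt_irrefl _ hθpos
  have hθb : θ ≠ b := by intro h; rw [h, h0b] at hθpos; exact lt_irrefl _ hθpos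
  have hθIoo : θ ∈ Set.Ioo a b :=
    ⟨lt_of_le_of_ne hθmem.1 (Ne.symm hθa), lt_of_le_of_ne hθmem.2 hθb⟩
  have hle := claim θ hθIoo.1 hθIoo.2
  have heq : f θ - secant f a b θ = f (x i) - secant f a b (x i) :=
    le_antisymm hle hθle
  by_contra hne
  have hmid := hhcon.2 hxiIcc hθmem hne (by norm_num : (0:ℝ) < 1/2)
    (by norm_num : (0:ℝ) < 1/2) (by norm_num)
  have hmidIcc : (1/2 : ℝ) • x i + (1/2 : ℝ) • θ ∈ Set.Icc a b :=
    (convex_Icc a b) hxiIcc hθmem (by norm_num) (by norm_num) (by norm_num)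
  have hmidle := (isMaxOn_iff.mp hθmax) _ hmidIcc
  simp only [smul_eq_mul] at hmid hmidle
  linarith
end
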